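/- arXiv:1510.00078 — 3 statements merged into one kernel-verified Lean document; each statement's English description precedes it below -/
import Mathlib

section
/- R^cl(ω+2, 3) ≤ R^cl(ω+1, 3) + P^cl(ω+2)₂; i.e., since R^cl(ω+1,3) = ω²+1 and P^cl(ω+2)₂ = ω²+ω+2, the ordinal ω²·2+ω+2 satisfies ω²·2+ω+2 →_cl (ω+2, 3)². -/
open Ordinal Set

noncomputable section

instance : TopologicalSpace Ordinal := Preorder.topology Ordinal
instance : OrderTopology Ordinal := ⟨rfl⟩

/-- `X` is order-isomorphic to the ordinal `a`. -/
def IsOrderCopy (X : Set Ordinal) (a : Ordinal) : Prop :=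
  Nonempty (X ≃o (Iio a))

/-- `X` is order-isomorphic to the ordinal `a` and closed in its supremum. -/
def IsClosedCopy (X : Set Ordinal) (a : Ordinal) : Prop :=
  IsOrderCopy X a ∧ ∀ S ⊆ X, S.Nonempty → sSup S < sSup X → sSup S ∈ X

/-- `X` is homeomorphic to the ordinal `a` with its order topology. -/
def IsTopCopy (X : Set Ordinal) (a : Ordinal) : Prop :=
  Nonempty (X ≃ₜ (Iio a))

/-- `X` is homogeneous for color `b` (red = `true`, blue = `false`):
every pair from `X` gets color `b`. -/
def Homog (c : Ordinal → Ordinal → Bool) (b : Bool) (X : Set Ordinal) : Prop :=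
  ∀ x ∈ X, ∀ y ∈ X, x < y → c x y = b

/-- There is a blue-homogeneous set of `m` points inside `β`. -/
def BlueSet (c : Ordinal → Ordinal → Bool) (β : Ordinal) (m : ℕ) : Prop :=
  ∃ H : Finset Ordinal, (H : Set Ordinal) ⊆ Iio β ∧ H.card = m ∧ Homog c false (H : Set Ordinal)

/-- The closed partition relation `β →_cl (a, m)²`. -/
def ToClosed2 (β a : Ordinal) (m : ℕ) : Prop :=
  ∀ c : Ordinal → Ordinal → Bool,
    (∃ X ⊆ Iio β, IsClosedCopy X a ∧ Homog c true X) ∨ BlueSet c β m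

/-- The topological partition relation `β →_top (a, m)²`. -/
def ToTop2 (β a : Ordinal) (m : ℕ) : Prop :=
  ∀ c : Ordinal → Ordinal → Bool,
    (∃ X ⊆ Iio β, IsTopCopy X a ∧ Homog c true X) ∨ BlueSet c β m

/-- The classical partition relation `β → (a, m)²`. -/
def ToPlain2 (β a : Ordinal) (m : ℕ) : Prop :=
  ∀ c : Ordinal → Ordinal → Bool,
    (∃ X ⊆ Iio β, IsOrderCopy X a ∧ Homog c true X) ∨ BlueSet c β m

/-- The closed pigeonhole relation `β →_cl (a)¹_k`. -/
def ToClosed1 (β a : Ordinal) (k : ℕ) : Prop :=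
  ∀ c : Ordinal → Fin k, ∃ i, ∃ X ⊆ Iio β, (∀ x ∈ X, c x = i) ∧ IsClosedCopy X a

/-- The topological pigeonhole relation `β →_top (a)¹_k`. -/
def ToTop1 (β a : Ordinal) (k : ℕ) : Prop :=
  ∀ c : Ordinal → Fin k, ∃ i, ∃ X ⊆ Iio β, (∀ x ∈ X, c x = i) ∧ IsTopCopy X a

/-- The classical pigeonhole relation `β → (a)¹_k`. -/
def ToPlain1 (β a : Ordinal) (k : ℕ) : Prop :=
  ∀ c : Ordinal → Fin k, ∃ i, ∃ X ⊆ Iio β, (∀ x ∈ X, c x = i) ∧ IsOrderCopy X a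

/-- The closed ordinal Ramsey number `R^cl(a, m)`. -/
def Rcl (a : Ordinal) (m : ℕ) : Ordinal := sInf {β | ToClosed2 β a m}

/-- The topological ordinal Ramsey number `R^top(a, m)`. -/
def Rtop (a : Ordinal) (m : ℕ) : Ordinal := sInf {β | ToTop2 β a m}

/-- The classical pigeonhole number `P(a)_k`. -/
def Pplain (a : Ordinal) (k : ℕ) : Ordinal := sInf {β | ToPlain1 β a k}

/-- The closed pigeonhole number `P^cl(a)_k`. -/
def PclK (a : Ordinal) (k : ℕ) : Ordinal := sInf {β | ToClosed1 β a k}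

section Stmt8Aux


private lemma stmt8_btrue {b : Bool} (h : b ≠ false) : b = true := by
  cases b
  · exact absurd rfl h
  · rfl

private lemma stmt8_bfalse {b : Bool} (h : b ≠ true) : b = false := by
  cases b
  · rfl
  · exact absurd rfl h

/-- Choose a strictly increasing cofinal-in-`l` sequence inside a set `Z`
which is cofinal below `l`, given an auxiliary cofinal sequence `cs`. -/
private lemma stmt8_seq (Z : Set Ordinal) (l : Ordinal) (cs : ℕ → Ordinal)
    (hcs : ∀ k, cs k < l) (hcof : ∀ γ, γ < l → ∃ k, γ ≤ cs k)
    (hZ : ∀ γ, γ < l → ∃ z, z ∈ Z ∧ γ < z ∧ z < l) :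
    ∃ u : ℕ → Ordinal, StrictMono u ∧ (∀ k, u k ∈ Z) ∧ (∀ k, u k < l) ∧
      ∀ γ, γ < l → ∃ k, γ < u k := by
  classical
  set f : Ordinal → Ordinal := fun γ =>
    if h : γ < l then (hZ γ h).choose else 0 with hf
  have hfspec : ∀ γ, γ < l → f γ ∈ Z ∧ γ < f γ ∧ f γ < l := by
    intro γ h
    have := (hZ γ h).choose_spec
    simpa [hf, dif_pos h] using this
  set u : ℕ → Ordinal := fun k => Nat.rec (f (cs 0)) (fun k ih => f (max ih (cs (k + 1)))) k
    with hu
  have h0 : u 0 = f (cs 0) := rfl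
  have hrec : ∀ k, u (k + 1) = f (max (u k) (cs (k + 1))) := fun k => rfl
  have key : ∀ k, u k ∈ Z ∧ u k < l ∧ cs k < u k := by
    intro k
    induction k with
    | zero =>
      rw [h0]
      have := hfspec (cs 0) (hcs 0)
      exact ⟨this.1, this.2.2, this.2.1⟩
    | succ k ih =>
      rw [hrec]
      have hm : max (u k) (cs (k + 1)) < l := max_lt ih.2.1 (hcs _)
      have := hfspec _ hm
      exact ⟨this.1, this.2.2, lt_of_le_of_lt (le_max_right _ _) this.2.1⟩
  have hmono : StrictMono u := by
    apply strictMono_nat_of_lt_succ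
    intro k
    rw [hrec]
    have hm : max (u k) (cs (k + 1)) < l := max_lt (key k).2.1 (hcs _)
    exact lt_of_le_of_lt (le_max_left _ _) (hfspec _ hm).2.1
  refine ⟨u, hmono, fun k => (key k).1, fun k => (key k).2.1, ?_⟩
  intro γ hγ
  obtain ⟨k, hk⟩ := hcof γ hγ
  exact ⟨k, lt_of_le_of_lt hk (key k).2.2⟩

/-- Greedy extraction of an infinite "red" clique from a sequence all of whose
"blue" neighbourhoods are finite. -/
private lemma stmt8_greedy (c : Ordinal → Ordinal → Bool) (s : ℕ → Ordinal)
    (hfin : ∀ v : ℕ, {n : ℕ | v < n ∧ c (s v) (s n) = false}.Finite) :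
    ∃ h : ℕ → ℕ, StrictMono h ∧ ∀ i j, i < j → c (s (h i)) (s (h j)) = true := by
  classical
  set g : ℕ → ℕ := fun v => sSup {n : ℕ | v < n ∧ c (s v) (s n) = false} + 1 with hg
  have hgspec : ∀ v n, g v ≤ n → v < n → c (s v) (s n) = true := by
    intro v n hgn hvn
    by_contra hfc
    have hmem : n ∈ {n : ℕ | v < n ∧ c (s v) (s n) = false} := ⟨hvn, stmt8_bfalse hfc⟩
    have h1 := le_csSup (hfin v).bddAbove hmem
    have h2 : sSup {n : ℕ | v < n ∧ c (s v) (s n) = false} + 1 ≤ n := hgn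
    omega
  set F : ℕ → ℕ × ℕ := fun k => Nat.rec (0, max 0 (g 0))
    (fun _ ih => (ih.2 + 1, max ih.2 (max (ih.2 + 1) (g (ih.2 + 1))))) k with hF
  have hF0 : F 0 = (0, max 0 (g 0)) := rfl
  have hFs : ∀ k, F (k + 1) = ((F k).2 + 1, max (F k).2 (max ((F k).2 + 1) (g ((F k).2 + 1)))) :=
    fun k => rfl
  have hab : ∀ k, (F k).1 ≤ (F k).2 ∧ g ((F k).1) ≤ (F k).2 := by
    intro k
    cases k with
    | zero =>
      rw [hF0]
      exact ⟨Nat.zero_le _, le_max_right _ _⟩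
    | succ k =>
      rw [hFs]
      exact ⟨le_max_of_le_right (le_max_left _ _), le_max_of_le_right (le_max_right _ _)⟩
  have hbmono : Monotone (fun k => (F k).2) := by
    apply monotone_nat_of_le_succ
    intro k
    rw [hFs]
    exact le_max_left _ _
  have hstep : ∀ i j, i < j → (F i).2 < (F j).1 := by
    intro i j hij
    cases j with
    | zero => omega
    | succ j =>
      rw [hFs]
      have : (F i).2 ≤ (F j).2 := hbmono (Nat.lt_succ_iff.mp hij)
      omega
  refine ⟨fun k => (F k).1, ?_, ?_⟩
  · apply strictMono_nat_of_lt_succ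
    intro k
    exact lt_of_le_of_lt (hab k).1 (hstep k (k + 1) (Nat.lt_succ_self k))
  · intro i j hij
    have h2 := hstep i j hij
    exact hgspec _ _ (le_trans (hab i).2 h2.le) (lt_of_le_of_lt (hab i).1 h2)


/-- Build a red closed copy of `ω+2` of the form `range u ∪ {l, t}`. -/
private lemma stmt8_exists_copy (c : Ordinal → Ordinal → Bool) (β' : Ordinal)
    (u : ℕ → Ordinal) (l t : Ordinal)
    (hu : StrictMono u) (hul : ∀ k, u k < l)
    (hsup : ∀ γ, γ < l → ∃ k, γ < u k)
    (hlt : l < t) (htb : t < β')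
    (r1 : ∀ i j, i < j → c (u i) (u j) = true)
    (r2 : ∀ k, c (u k) l = true)
    (r3 : ∀ k, c (u k) t = true)
    (r4 : c l t = true) :
    ∃ X ⊆ Iio β', IsClosedCopy X (ω + 2) ∧ Homog c true X := by
  classical
  set X : Set Ordinal := Set.range u ∪ {l, t} with hX
  have hmu : ∀ k, u k ∈ X := fun k => Or.inl ⟨k, rfl⟩
  have hml : l ∈ X := Or.inr (Or.inl rfl)
  have hmt : t ∈ X := Or.inr (Or.inr rfl)
  have hcases : ∀ z ∈ X, (∃ k, z = u k) ∨ z = l ∨ z = t := by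
    intro z hz
    rcases hz with ⟨k, hk⟩ | hz
    · exact Or.inl ⟨k, hk.symm⟩
    · rcases hz with hz | hz
      · exact Or.inr (Or.inl hz)
      · exact Or.inr (Or.inr hz)
  have hub : ∀ z ∈ X, z ≤ t := by
    intro z hz
    rcases hcases z hz with ⟨k, rfl⟩ | rfl | rfl
    · exact le_of_lt (lt_trans (hul k) hlt)
    · exact le_of_lt hlt
    · exact le_rfl
  have hXsub : X ⊆ Iio β' := fun z hz => lt_of_le_of_lt (hub z hz) htb
  -- basic ordinal facts about ω+2
  have homega2 : (ω : Ordinal) + 2 = (ω + 1) + 1 := by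
    rw [add_assoc]
    norm_num
  have hωω1 : (ω : Ordinal) < ω + 1 := by
    calc (ω : Ordinal) = ω + 0 := (add_zero _).symm
    _ < ω + 1 := by exact_mod_cast (add_lt_add_iff_left (ω : Ordinal)).mpr zero_lt_one
  have hω1ω2 : (ω : Ordinal) + 1 < ω + 2 := by
    rw [homega2]
    calc (ω : Ordinal) + 1 = (ω + 1) + 0 := (add_zero _).symm
    _ < (ω + 1) + 1 := (add_lt_add_iff_left _).mpr zero_lt_one
  have hωω2 : (ω : Ordinal) < ω + 2 := lt_trans hωω1 hω1ω2
  have hto : ∀ o : Ordinal, o < ω + 2 → ¬o < ω → o ≠ ω → o = ω + 1 := by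
    intro o ho h1 h2
    have hle : o ≤ ω + 1 := by
      rw [homega2, Ordinal.add_one_eq_succ, Order.lt_succ_iff] at ho
      exact ho
    have hge : ω + 1 ≤ o := by
      have hlt' : ω < o := lt_of_le_of_ne (not_lt.mp h1) (Ne.symm h2)
      rw [Ordinal.add_one_eq_succ]
      exact Order.succ_le_of_lt hlt'
    exact le_antisymm hle hge
  have natval : ∀ (o : Ordinal) (h : o < ω), ((Ordinal.lt_omega0.mp h).choose : Ordinal) = o :=
    fun o h => ((Ordinal.lt_omega0.mp h).choose_spec).symm
  set g : (Iio (ω + 2) : Set Ordinal) → X := fun p =>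
    if h : p.1 < ω then ⟨u (Ordinal.lt_omega0.mp h).choose, hmu _⟩
    else if h2 : p.1 = ω then ⟨l, hml⟩ else ⟨t, hmt⟩ with hgdef
  have hgmono : StrictMono g := by
    rintro ⟨p, hp⟩ ⟨q, hq⟩ hpq
    have hpq' : p < q := hpq
    by_cases h1 : p < ω
    · by_cases h2 : q < ω
      · simp only [hgdef, dif_pos h1, dif_pos h2]
        have hcast : ((Ordinal.lt_omega0.mp h1).choose : Ordinal) <
            ((Ordinal.lt_omega0.mp h2).choose : Ordinal) := by
          rw [natval p h1, natval q h2]; exact hpq'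
        have hnat : (Ordinal.lt_omega0.mp h1).choose < (Ordinal.lt_omega0.mp h2).choose := by
          exact_mod_cast hcast
        exact Subtype.mk_lt_mk.mpr (hu hnat)
      · by_cases h3 : q = ω
        · simp only [hgdef, dif_pos h1, dif_neg h2, dif_pos h3]
          exact Subtype.mk_lt_mk.mpr (hul _)
        · simp only [hgdef, dif_pos h1, dif_neg h2, dif_neg h3]
          exact Subtype.mk_lt_mk.mpr (lt_trans (hul _) hlt)
    · have hq1 : ¬q < ω := fun hq' => h1 (lt_trans hpq' hq')
      by_cases h3 : p = ω
      · have hq3 : q ≠ ω := by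
          intro hqe
          rw [h3, hqe] at hpq'
          exact lt_irrefl _ hpq'
        simp only [hgdef, dif_neg h1, dif_pos h3, dif_neg hq1, dif_neg hq3]
        exact Subtype.mk_lt_mk.mpr hlt
      · have hp4 : p = ω + 1 := hto p hp h1 h3
        have hq4 : q ≤ ω + 1 := by
          have hq' : q < ω + 2 := hq
          rw [homega2, Ordinal.add_one_eq_succ, Order.lt_succ_iff] at hq'
          exact hq'
        rw [hp4] at hpq'
        exact absurd hpq' (not_lt.mpr hq4)
  have hgsurj : Function.Surjective g := by
    rintro ⟨z, hz⟩
    rcases hcases z hz with ⟨k, rfl⟩ | rfl | rfl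
    · have h1 : ((k : ℕ) : Ordinal) < ω := Ordinal.nat_lt_omega0 k
      refine ⟨⟨(k : Ordinal), lt_trans h1 hωω2⟩, ?_⟩
      simp only [hgdef, dif_pos h1]
      have hch : (Ordinal.lt_omega0.mp h1).choose = k := by
        have := natval (k : Ordinal) h1
        exact_mod_cast this
      exact Subtype.ext (by simp [hch])
    · refine ⟨⟨ω, hωω2⟩, ?_⟩
      show (if h : (ω : Ordinal) < ω then _ else if _ : (ω : Ordinal) = ω then _ else _) = _
      rw [dif_neg (lt_irrefl (ω : Ordinal)), dif_pos rfl]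
    · refine ⟨⟨ω + 1, hω1ω2⟩, ?_⟩
      have hn1 : ¬(ω : Ordinal) + 1 < ω := not_lt.mpr (le_self_add)
      have hn2 : (ω : Ordinal) + 1 ≠ ω := ne_of_gt hωω1
      show (if h : (ω : Ordinal) + 1 < ω then _ else if _ : (ω : Ordinal) + 1 = ω then _ else _) = _
      rw [dif_neg hn1, dif_neg hn2]
  have hiso : IsOrderCopy X (ω + 2) :=
    ⟨(StrictMono.orderIsoOfSurjective g hgmono hgsurj).symm⟩
  have hgrX : IsGreatest X t := ⟨hmt, hub⟩
  have hsupX : sSup X = t := hgrX.csSup_eq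
  have hclosed : ∀ S ⊆ X, S.Nonempty → sSup S < sSup X → sSup S ∈ X := by
    intro S hS hne hlt'
    rw [hsupX] at hlt'
    have hbddS : BddAbove S := ⟨t, fun z hz => hub z (hS hz)⟩
    have htns : t ∉ S := fun h => absurd (le_csSup hbddS h) (not_le.mpr hlt')
    by_cases hlmem : l ∈ S
    · have hgr : IsGreatest S l := by
        refine ⟨hlmem, ?_⟩
        intro z hz
        rcases hcases z (hS hz) with ⟨k, rfl⟩ | rfl | rfl
        · exact (hul k).le
        · exact le_rfl
        · exact absurd hz htns
      rw [hgr.csSup_eq]; exact hml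
    · have hSu : ∀ z ∈ S, ∃ k, z = u k := by
        intro z hz
        rcases hcases z (hS hz) with h | rfl | rfl
        · exact h
        · exact absurd hz hlmem
        · exact absurd hz htns
      obtain ⟨z0, hz0⟩ := hne
      obtain ⟨k0, rfl⟩ := hSu z0 hz0
      have hJne : Set.Nonempty {k : ℕ | u k ∈ S} := ⟨k0, hz0⟩
      by_cases hJb : BddAbove {k : ℕ | u k ∈ S}
      · have hmax : sSup {k : ℕ | u k ∈ S} ∈ {k : ℕ | u k ∈ S} := Nat.sSup_mem hJne hJb
        have hgr : IsGreatest S (u (sSup {k : ℕ | u k ∈ S})) := by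
          refine ⟨hmax, ?_⟩
          intro z hz
          obtain ⟨k, rfl⟩ := hSu z hz
          exact hu.monotone (le_csSup hJb (show k ∈ {k : ℕ | u k ∈ S} from hz))
        rw [hgr.csSup_eq]
        exact hmu _
      · have hsupS : sSup S = l := by
          apply le_antisymm
          · refine csSup_le ⟨u k0, hz0⟩ ?_
            intro z hz
            obtain ⟨k, rfl⟩ := hSu z hz
            exact (hul k).le
          · by_contra hcon
            push_neg at hcon
            obtain ⟨k1, hk1⟩ := hsup _ hcon
            obtain ⟨k2, hk2, hk12⟩ := not_bddAbove_iff.mp hJb k1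
            have hA : u k2 ≤ sSup S := le_csSup hbddS hk2
            have hBB : u k1 ≤ u k2 := hu.monotone hk12.le
            exact absurd (lt_of_lt_of_le hk1 (le_trans hBB hA)) (lt_irrefl _)
        rw [hsupS]
        exact hml
  have hhom : Homog c true X := by
    intro x hx y hy hxy
    rcases hcases x hx with ⟨i, rfl⟩ | rfl | rfl <;> rcases hcases y hy with ⟨j, rfl⟩ | rfl | rfl
    · exact r1 i j (hu.lt_iff_lt.mp hxy)
    · exact r2 i
    · exact r3 i
    · exact absurd hxy (not_lt.mpr (hul j).le)
    · exact absurd hxy (lt_irrefl _)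
    · exact r4
    · exact absurd hxy (not_lt.mpr (le_of_lt (lt_trans (hul j) hlt)))
    · exact absurd hxy (not_lt.mpr hlt.le)
    · exact absurd hxy (lt_irrefl _)
  exact ⟨X, hXsub, ⟨hiso, hclosed⟩, hhom⟩

end Stmt8Aux

/-- `ω²·2 + ω + 2 →_cl (ω+2, 3)²`,
i.e. `R^cl(ω+2,3) ≤ R^cl(ω+1,3) + P^cl(ω+2)₂ = ω²·2+ω+2`. -/
theorem stmt8 :
    ToClosed2 ((ω : Ordinal) ^ (2 : Ordinal) * 2 + ω + 2) (ω + 2) 3 := by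
  classical
  intro c
  by_cases hBS : BlueSet c ((ω : Ordinal) ^ (2 : Ordinal) * 2 + ω + 2) 3
  · exact Or.inr hBS
  left
  by_contra hR
  have h2eq : (2 : Ordinal) = 1 + 1 := by norm_num
  have hpow : (ω : Ordinal) ^ (2 : Ordinal) = ω * ω := by rw [h2eq, opow_add, opow_one]
  have hBL0 : (ω : Ordinal) ^ (2 : Ordinal) * 2 + ω + 2 = (ω * ω + ω * ω) + (ω + 2) := by
    rw [hpow, show ((ω * ω : Ordinal) * 2) = ω * ω + ω * ω from by rw [h2eq, mul_add, mul_one],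
      add_assoc]
  set W : Ordinal := ω * ω with hW
  set L : Ordinal := W + W with hL
  set B : Ordinal := (ω : Ordinal) ^ (2 : Ordinal) * 2 + ω + 2 with hBdef
  have hBL : B = L + (ω + 2) := hBL0
  have h02 : (0 : Ordinal) < 2 := by exact_mod_cast Nat.zero_lt_two
  have h12 : (1 : Ordinal) < 2 := by exact_mod_cast Nat.one_lt_two
  have hWpos : (0 : Ordinal) < W := by rw [hW]; exact mul_pos omega0_pos omega0_pos
  have hWL : W < L := by
    rw [hL]
    calc W = W + 0 := (add_zero _).symm
    _ < W + W := (add_lt_add_iff_left _).mpr hWpos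
  have hLB : L < B := by
    rw [hBL]
    calc L = L + 0 := (add_zero _).symm
    _ < L + (ω + 2) := (add_lt_add_iff_left _).mpr
        (lt_of_lt_of_le omega0_pos (le_self_add))
  have hWB : W < B := hWL.trans hLB
  -- cofinal structure of W and L
  have hcofW : ∀ γ : Ordinal, γ < W → ∃ k : ℕ, γ ≤ ω * k := by
    intro γ hγ
    rw [hW, lt_mul_iff_of_isSuccLimit isSuccLimit_omega0] at hγ
    obtain ⟨c', hc', hγc⟩ := hγ
    obtain ⟨n, rfl⟩ := Ordinal.lt_omega0.mp hc'
    exact ⟨n, hγc.le⟩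
  have hcsW : ∀ k : ℕ, (ω : Ordinal) * k < W := by
    intro k
    rw [hW]
    exact (mul_lt_mul_iff_right₀ omega0_pos).mpr (Ordinal.nat_lt_omega0 k)
  have haddW : ∀ γ : Ordinal, γ < W → γ + ω < W := by
    intro γ hγ
    obtain ⟨n, hn⟩ := hcofW γ hγ
    have h1 : γ + ω ≤ ω * n + ω := add_le_add_left hn ω
    have h2' : (ω : Ordinal) * ((n : Ordinal) + 1) = ω * n + ω := by rw [mul_add, mul_one]
    have h3 : (ω : Ordinal) * ((n : Ordinal) + 1) < W := by
      rw [hW]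
      refine (mul_lt_mul_iff_right₀ omega0_pos).mpr ?_
      exact_mod_cast Ordinal.nat_lt_omega0 (n + 1)
    calc γ + ω ≤ ω * n + ω := h1
    _ = ω * ((n : Ordinal) + 1) := h2'.symm
    _ < W := h3
  have hsupadd : ∀ γ δ : Ordinal, δ < γ + ω → ∃ k : ℕ, δ < γ + ((k : Ordinal) + 1) := by
    intro γ δ hδ
    rcases le_or_gt δ γ with h | h
    · refine ⟨0, lt_of_le_of_lt h ?_⟩
      calc γ = γ + 0 := (add_zero _).symm
      _ < γ + ((0 : ℕ) + 1 : Ordinal) := by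
          refine (add_lt_add_iff_left γ).mpr ?_
          simp
    · have hle : γ ≤ δ := h.le
      have heq : γ + (δ - γ) = δ := Ordinal.add_sub_cancel_of_le hle
      have hrl : δ - γ < ω := by
        by_contra hc
        push_neg at hc
        have h5 : γ + ω ≤ γ + (δ - γ) := add_le_add_right hc γ
        rw [heq] at h5
        exact absurd hδ (not_lt.mpr h5)
      obtain ⟨m, hm⟩ := Ordinal.lt_omega0.mp hrl
      refine ⟨m, ?_⟩
      rw [← heq, hm]
      refine (add_lt_add_iff_left γ).mpr ?_
      calc ((m : ℕ) : Ordinal) = (m : Ordinal) + 0 := (add_zero _).symm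
      _ < (m : Ordinal) + 1 := (add_lt_add_iff_left _).mpr zero_lt_one
  have hseqlt : ∀ (γ : Ordinal) (k : ℕ), γ < γ + ((k : Ordinal) + 1) := by
    intro γ k
    calc γ = γ + 0 := (add_zero _).symm
    _ < γ + ((k : Ordinal) + 1) := (add_lt_add_iff_left _).mpr
        (lt_of_lt_of_le zero_lt_one (le_add_self))
  have hseqω : ∀ (γ : Ordinal) (k : ℕ), γ + ((k : Ordinal) + 1) < γ + ω := by
    intro γ k
    refine (add_lt_add_iff_left _).mpr ?_
    exact_mod_cast Ordinal.nat_lt_omega0 (k + 1)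
  have hseqmono : ∀ γ : Ordinal, StrictMono (fun k : ℕ => γ + ((k : Ordinal) + 1)) := by
    intro γ i j hij
    refine (add_lt_add_iff_left γ).mpr ?_
    exact_mod_cast Nat.succ_lt_succ hij
  have hγω : ∀ γ : Ordinal, γ < γ + ω := fun γ => by
    calc γ = γ + 0 := (add_zero _).symm
    _ < γ + ω := (add_lt_add_iff_left _).mpr omega0_pos
  have hlt1 : ∀ γ : Ordinal, γ < γ + 1 := by
    intro γ
    calc γ = γ + 0 := (add_zero _).symm
    _ < γ + 1 := (add_lt_add_iff_left _).mpr zero_lt_one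
  -- no blue triple
  have noTriple : ∀ x y z : Ordinal, x < y → y < z → z < B →
      c x y = false → c x z = false → c y z = false → False := by
    intro x y z hxy hyz hzB h1 h2 h3
    apply hBS
    refine ⟨{x, y, z}, ?_, ?_, ?_⟩
    · intro w hw
      simp only [Finset.coe_insert, Set.mem_insert_iff, Finset.coe_singleton,
        Set.mem_singleton_iff] at hw
      rcases hw with rfl | rfl | rfl
      · exact lt_trans (lt_trans hxy hyz) hzB
      · exact lt_trans hyz hzB
      · exact hzB
    · rw [Finset.card_insert_of_notMem, Finset.card_insert_of_notMem, Finset.card_singleton]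
      · simp only [Finset.mem_singleton]
        exact ne_of_lt hyz
      · simp only [Finset.mem_insert, Finset.mem_singleton]
        push_neg
        exact ⟨ne_of_lt hxy, ne_of_lt (lt_trans hxy hyz)⟩
    · intro a ha b hb hab
      simp only [Finset.coe_insert, Set.mem_insert_iff, Finset.coe_singleton,
        Set.mem_singleton_iff] at ha hb
      rcases ha with rfl | rfl | rfl <;> rcases hb with rfl | rfl | rfl <;>
        first
        | exact h1
        | exact h2
        | exact h3
        | exact absurd hab (lt_irrefl _)
        | exact absurd hab hxy.asymm
        | exact absurd hab hyz.asymm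
        | exact absurd hab (hxy.trans hyz).asymm
  -- no red closed copy of ω+2
  have noCopy : ∀ (u : ℕ → Ordinal) (l t : Ordinal), StrictMono u → (∀ k, u k < l) →
      (∀ γ, γ < l → ∃ k, γ < u k) → l < t → t < B →
      (∀ i j, i < j → c (u i) (u j) = true) → (∀ k, c (u k) l = true) →
      (∀ k, c (u k) t = true) → c l t = true → False := by
    intro u l t h1 h2 h3 h4 h5 h6 h7 h8 h9
    exact hR (stmt8_exists_copy c B u l t h1 h2 h3 h4 h5 h6 h7 h8 h9)
  -- Stage 1 : a red closed copy of ω+1 with top x ≤ W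
  obtain ⟨a, x, ha, hax, hasup, hxW, hared, harx⟩ :
      ∃ (a : ℕ → Ordinal) (x : Ordinal), StrictMono a ∧ (∀ k, a k < x) ∧
        (∀ γ, γ < x → ∃ k, γ < a k) ∧ x ≤ W ∧
        (∀ i j, i < j → c (a i) (a j) = true) ∧ (∀ k, c (a k) x = true) := by
    by_cases hcof : ∀ γ, γ < W → ∃ z, z ∈ {z : Ordinal | z < W ∧ c z W = true} ∧ γ < z ∧ z < W
    · -- points red to W are cofinal in W
      obtain ⟨s, hs, hsZ, hsW, hscof⟩ := stmt8_seq {z : Ordinal | z < W ∧ c z W = true} W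
        (fun k => ω * k) hcsW hcofW hcof
      by_cases hex : ∃ v : ℕ, {n : ℕ | v < n ∧ c (s v) (s n) = false}.Infinite
      · obtain ⟨v, hv⟩ := hex
        have hvi : {n : ℕ | v < n ∧ c (s v) (s n) = false}.Infinite := hv
        refine ⟨fun k => s (Nat.nth (fun n => v < n ∧ c (s v) (s n) = false) k), W,
          hs.comp (Nat.nth_strictMono hvi), fun k => hsW _, ?_, le_rfl, ?_, fun k => (hsZ _).2⟩
        · intro γ hγ
          obtain ⟨k, hk⟩ := hscof γ hγ
          exact ⟨k, lt_of_lt_of_le hk (hs.monotone (Nat.nth_strictMono hvi).le_apply)⟩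
        · intro i j hij
          have hmn := Nat.nth_strictMono hvi hij
          have hm1 := Nat.nth_mem_of_infinite hvi i
          have hm2 := Nat.nth_mem_of_infinite hvi j
          by_contra hfc
          exact noTriple (s v) _ _ (hs hm1.1) (hs hmn) (lt_trans (hsW _) hWB)
            hm1.2 hm2.2 (stmt8_bfalse hfc)
      · push_neg at hex
        have hfin : ∀ v, {n : ℕ | v < n ∧ c (s v) (s n) = false}.Finite :=
          fun v => hex v
        obtain ⟨h, hh, hhred⟩ := stmt8_greedy c s hfin
        refine ⟨fun k => s (h k), W, hs.comp hh, fun k => hsW _, ?_, le_rfl,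
          fun i j hij => hhred i j hij, fun k => (hsZ _).2⟩
        intro γ hγ
        obtain ⟨k, hk⟩ := hscof γ hγ
        exact ⟨k, lt_of_lt_of_le hk (hs.monotone hh.le_apply)⟩
    · -- points red to W are bounded below W
      rw [not_forall] at hcof
      obtain ⟨γ, hγ⟩ := hcof
      rw [Classical.not_imp] at hγ
      obtain ⟨hγW, hbd⟩ := hγ
      have hblue : ∀ z, γ < z → z < W → c z W = false := by
        intro z h1 h2
        by_contra hc
        exact hbd ⟨z, ⟨h2, stmt8_btrue hc⟩, h1, h2⟩
      have hγωW : γ + ω < W := haddW γ hγW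
      refine ⟨fun k => γ + ((k : Ordinal) + 1), γ + ω, hseqmono γ, hseqω γ, hsupadd γ,
        hγωW.le, ?_, ?_⟩
      · intro i j hij
        by_contra hfc
        exact noTriple (γ + ((i : Ordinal) + 1)) (γ + ((j : Ordinal) + 1)) W
          (hseqmono γ hij) (lt_trans (hseqω γ j) hγωW) hWB
          (stmt8_bfalse hfc)
          (hblue _ (hseqlt γ i) (lt_trans (hseqω γ i) hγωW))
          (hblue _ (hseqlt γ j) (lt_trans (hseqω γ j) hγωW))
      · intro k
        by_contra hfc
        exact noTriple (γ + ((k : Ordinal) + 1)) (γ + ω) W (hseqω γ k) hγωW hWB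
          (stmt8_bfalse hfc)
          (hblue _ (hseqlt γ k) (lt_trans (hseqω γ k) hγωW))
          (hblue _ (hγω γ) hγωW)
  have hxB : x < B := lt_of_le_of_lt hxW hWB
  -- key dichotomy for tail points
  have key : ∀ z, W < z → z < B → c x z = false ∨ {k : ℕ | c (a k) z = true}.Finite := by
    intro z hWz hzB
    by_contra hc
    push_neg at hc
    obtain ⟨hc1, hc2⟩ := hc
    have hc1' : c x z = true := stmt8_btrue hc1
    have hinf : {k : ℕ | c (a k) z = true}.Infinite := hc2
    have hxz : x < z := lt_of_le_of_lt hxW hWz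
    exact noCopy (fun k => a (Nat.nth (fun k => c (a k) z = true) k)) x z
      (ha.comp (Nat.nth_strictMono hinf))
      (fun k => hax _)
      (fun γ hγ => by
        obtain ⟨k, hk⟩ := hasup γ hγ
        exact ⟨k, lt_of_lt_of_le hk (ha.monotone (Nat.nth_strictMono hinf).le_apply)⟩)
      hxz hzB
      (fun i j hij => hared _ _ (Nat.nth_strictMono hinf hij))
      (fun k => harx _)
      (fun k => Nat.nth_mem_of_infinite hinf k)
      hc1'
  -- the two red cliques covering the tail
  have redP : ∀ z z', W < z → z < z' → z' < B → {k : ℕ | c (a k) z = true}.Finite →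
      {k : ℕ | c (a k) z' = true}.Finite → c z z' = true := by
    intro z z' h1 h2 h3 hf1 hf2
    obtain ⟨k, hk⟩ := ((hf1.union hf2).infinite_compl).nonempty
    simp only [Set.mem_compl_iff, Set.mem_union, Set.mem_setOf_eq] at hk
    push_neg at hk
    by_contra hfc
    exact noTriple (a k) z z' (((hax k).trans_le hxW).trans h1) h2 h3
      (stmt8_bfalse hk.1) (stmt8_bfalse hk.2) (stmt8_bfalse hfc)
  have redQ : ∀ z z', W < z → z < z' → z' < B → c x z = false → c x z' = false →
      c z z' = true := by
    intro z z' h1 h2 h3 hb1 hb2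
    by_contra hfc
    exact noTriple x z z' (lt_of_le_of_lt hxW h1) h2 h3 hb1 hb2 (stmt8_bfalse hfc)
  -- cofinal sequence for L
  have hcofL : ∀ γ, γ < L → ∃ k : ℕ, γ ≤ W + ω * k := by
    intro γ hγ
    rcases le_or_gt γ W with h | h
    · exact ⟨0, by simpa using h⟩
    · have hle : W ≤ γ := h.le
      have heq : W + (γ - W) = γ := Ordinal.add_sub_cancel_of_le hle
      have hrw : γ - W < W := by
        by_contra hc
        push_neg at hc
        have h5 : W + W ≤ W + (γ - W) := add_le_add_right hc W
        rw [heq] at h5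
        rw [hL] at hγ
        exact absurd hγ (not_lt.mpr h5)
      obtain ⟨n, hn⟩ := hcofW _ hrw
      refine ⟨n, ?_⟩
      rw [← heq]
      exact add_le_add_right hn W
  have hcsL : ∀ k : ℕ, W + ω * k < L := by
    intro k
    rw [hL]
    exact (add_lt_add_iff_left W).mpr (hcsW k)
  -- the symmetric pigeonhole argument
  have sym : ∀ X Y : Set Ordinal,
      (∀ z, W < z → z < B → z ∈ X ∨ z ∈ Y) →
      (∀ z, z ∈ X → W < z ∧ z < B) →
      (∀ z z', z ∈ X → z' ∈ X → z < z' → c z z' = true) →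
      (∀ z z', z ∈ Y → z' ∈ Y → z < z' → c z z' = true) →
      L ∈ X → False := by
    intro X Y hcover hmX hrX hrY hLX
    by_cases hcf : ∀ γ, γ < L → ∃ z, z ∈ {z : Ordinal | z ∈ X ∧ z < L} ∧ γ < z ∧ z < L
    · by_cases hT : ∃ t, t ∈ X ∧ L < t
      · obtain ⟨t, htX, hLt⟩ := hT
        obtain ⟨s, hs, hsZ, hsL, hscof⟩ := stmt8_seq {z : Ordinal | z ∈ X ∧ z < L} L
          (fun k => W + ω * k) hcsL hcofL hcf
        exact noCopy s L t hs hsL hscof hLt (hmX t htX).2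
          (fun i j hij => hrX _ _ (hsZ i).1 (hsZ j).1 (hs hij))
          (fun k => hrX _ _ (hsZ k).1 hLX (hsL k))
          (fun k => hrX _ _ (hsZ k).1 htX ((hsL k).trans hLt))
          (hrX L t hLX htX hLt)
      · -- no point of X above L : the whole interval (L, B) is inside Y
        have hYtail : ∀ z, L < z → z < B → z ∈ Y := by
          intro z h1 h2
          rcases hcover z (hWL.trans h1) h2 with hX' | hY'
          · exact absurd ⟨z, hX', h1⟩ hT
          · exact hY'
        have hLωB : L + ω < B := by
          rw [hBL]
          refine (add_lt_add_iff_left L).mpr ?_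
          calc (ω : Ordinal) = ω + 0 := (add_zero _).symm
          _ < ω + 2 := (add_lt_add_iff_left _).mpr h02
        have hLω1B : L + ω + 1 < B := by
          rw [hBL, add_assoc]
          refine (add_lt_add_iff_left L).mpr ?_
          exact (add_lt_add_iff_left _).mpr h12
        have hm1 : L + ω ∈ Y := hYtail _ (hγω L) hLωB
        have hm2 : L + ω + 1 ∈ Y := hYtail _ ((hγω L).trans (hlt1 (L + ω))) hLω1B
        have hmu : ∀ k : ℕ, L + ((k : Ordinal) + 1) ∈ Y :=
          fun k => hYtail _ (hseqlt L k) (lt_trans (hseqω L k) hLωB)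
        exact noCopy (fun k => L + ((k : Ordinal) + 1)) (L + ω) (L + ω + 1)
          (hseqmono L) (hseqω L) (hsupadd L) (hlt1 (L + ω)) hLω1B
          (fun i j hij => hrY _ _ (hmu i) (hmu j) (hseqmono L hij))
          (fun k => hrY _ _ (hmu k) hm1 (hseqω L k))
          (fun k => hrY _ _ (hmu k) hm2 (lt_trans (hseqω L k) (hlt1 (L + ω))))
          (hrY _ _ hm1 hm2 (hlt1 (L + ω)))
    · -- X ∩ L bounded : a whole interval (γ', L) is inside Y
      rw [not_forall] at hcf
      obtain ⟨γ0, hγ0⟩ := hcf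
      rw [Classical.not_imp] at hγ0
      obtain ⟨hγ0L, hbd⟩ := hγ0
      set γ' : Ordinal := max γ0 W with hγ'
      have hγ'L : γ' < L := max_lt hγ0L hWL
      have hint : ∀ z, γ' < z → z < L → z ∈ Y := by
        intro z h1 h2
        have hWz : W < z := lt_of_le_of_lt (le_max_right γ0 W) h1
        rcases hcover z hWz (h2.trans hLB) with hX' | hY'
        · exact absurd ⟨z, ⟨hX', h2⟩, lt_of_le_of_lt (le_max_left γ0 W) h1, h2⟩ hbd
        · exact hY'
      have hγ'ω1L : γ' + ω + 1 < L := by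
        have hWγ' : W ≤ γ' := le_max_right γ0 W
        have heq : W + (γ' - W) = γ' := Ordinal.add_sub_cancel_of_le hWγ'
        have hr : γ' - W < W := by
          by_contra hc
          push_neg at hc
          have h5 : W + W ≤ W + (γ' - W) := add_le_add_right hc W
          rw [heq] at h5
          rw [hL] at hγ'L
          exact absurd hγ'L (not_lt.mpr h5)
        obtain ⟨n, hn⟩ := hcofW _ hr
        have h1 : γ' + ω + 1 ≤ (W + ω * n) + ω + 1 := by
          have h6 : γ' ≤ W + ω * n := by
            rw [← heq]
            exact add_le_add_right hn W
          exact add_le_add_left (add_le_add_left h6 ω) 1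
        have e1 : (ω : Ordinal) * ((n : Ordinal) + 2) = (ω * n + ω) + ω := by
          rw [h2eq, show ((n : Ordinal) + (1 + 1)) = ((n : Ordinal) + 1) + 1 from
            (add_assoc _ _ _).symm, mul_add, mul_add, mul_one]
        have e2 : (ω * (n : Ordinal) + ω) + 1 < ω * ((n : Ordinal) + 2) := by
          rw [e1]
          exact (add_lt_add_iff_left _).mpr one_lt_omega0
        have e3 : (ω : Ordinal) * ((n : Ordinal) + 2) < W := by
          rw [hW]
          refine (mul_lt_mul_iff_right₀ omega0_pos).mpr ?_
          exact_mod_cast Ordinal.nat_lt_omega0 (n + 2)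
        have h7 : (W + ω * n) + ω + 1 < L := by
          rw [hL, add_assoc, add_assoc]
          refine (add_lt_add_iff_left W).mpr ?_
          rw [← add_assoc]
          exact lt_trans e2 e3
        exact lt_of_le_of_lt h1 h7
      have hγ'ωL : γ' + ω < L := lt_trans (hlt1 (γ' + ω)) hγ'ω1L
      have hm1 : γ' + ω ∈ Y := hint _ (hγω γ') hγ'ωL
      have hm2 : γ' + ω + 1 ∈ Y := hint _ ((hγω γ').trans (hlt1 (γ' + ω))) hγ'ω1L
      have hmu : ∀ k : ℕ, γ' + ((k : Ordinal) + 1) ∈ Y :=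
        fun k => hint _ (hseqlt γ' k) (lt_trans (hseqω γ' k) hγ'ωL)
      exact noCopy (fun k => γ' + ((k : Ordinal) + 1)) (γ' + ω) (γ' + ω + 1)
        (hseqmono γ') (hseqω γ') (hsupadd γ') (hlt1 (γ' + ω)) (hγ'ω1L.trans hLB)
        (fun i j hij => hrY _ _ (hmu i) (hmu j) (hseqmono γ' hij))
        (fun k => hrY _ _ (hmu k) hm1 (hseqω γ' k))
        (fun k => hrY _ _ (hmu k) hm2 (lt_trans (hseqω γ' k) (hlt1 (γ' + ω))))
        (hrY _ _ hm1 hm2 (hlt1 (γ' + ω)))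
  -- finish : partition of the tail into the two cliques
  by_cases hPL : {k : ℕ | c (a k) L = true}.Finite
  · refine sym {z : Ordinal | W < z ∧ z < B ∧ {k : ℕ | c (a k) z = true}.Finite}
      {z : Ordinal | W < z ∧ z < B ∧ c x z = false} ?_ ?_ ?_ ?_ ⟨hWL, hLB, hPL⟩
    · intro z h1 h2
      by_cases hf : {k : ℕ | c (a k) z = true}.Finite
      · exact Or.inl ⟨h1, h2, hf⟩
      · rcases key z h1 h2 with hq | hp
        · exact Or.inr ⟨h1, h2, hq⟩
        · exact absurd hp hf
    · exact fun z hz => ⟨hz.1, hz.2.1⟩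
    · exact fun z z' hz hz' hlt => redP z z' hz.1 hlt hz'.2.1 hz.2.2 hz'.2.2
    · exact fun z z' hz hz' hlt => redQ z z' hz.1 hlt hz'.2.1 hz.2.2 hz'.2.2
  · have hQL : c x L = false := by
      rcases key L hWL hLB with hq | hp
      · exact hq
      · exact absurd hp hPL
    refine sym {z : Ordinal | W < z ∧ z < B ∧ c x z = false}
      {z : Ordinal | W < z ∧ z < B ∧ {k : ℕ | c (a k) z = true}.Finite} ?_ ?_ ?_ ?_ ⟨hWL, hLB, hQL⟩
    · intro z h1 h2
      rcases key z h1 h2 with hq | hp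
      · exact Or.inl ⟨h1, h2, hq⟩
      · exact Or.inr ⟨h1, h2, hp⟩
    · exact fun z hz => ⟨hz.1, hz.2.1⟩
    · exact fun z z' hz hz' hlt => redQ z z' hz.1 hlt hz'.2.1 hz.2.2 hz'.2.2
    · exact fun z z' hz hz' hlt => redP z z' hz.1 hlt hz'.2.1 hz.2.2 hz'.2.2


end
end

section
/- Weak Erdős–Milner theorem: let α, β be countable nonzero ordinals and k > 1 a positive integer. If ω^α → (ω^(1+β), k)², then ω^(α+β) → (ω^(1+β), k+1)². -/
open Ordinal Set

noncomputable section

namespace EM13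
open Cardinal
universe u

/-- Extract the natural number underlying an ordinal `< ω`. -/
noncomputable def natOf (o : Ordinal) : ℕ :=
  if h : o < ω then Classical.choose (Ordinal.lt_omega0.1 h) else 0

lemma cast_natOf {o : Ordinal} (h : o < ω) : ((natOf o : ℕ) : Ordinal) = o := by
  rw [natOf, dif_pos h]
  exact (Classical.choose_spec (Ordinal.lt_omega0.1 h)).symm

lemma natOf_cast (n : ℕ) : natOf (n : Ordinal) = n := by
  have h : ((n : Ordinal)) < ω := nat_lt_omega0 n
  have := cast_natOf h
  exact_mod_cast this

lemma natOf_lt {o o' : Ordinal} (h : o < o') (h' : o' < ω) : natOf o < natOf o' := by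
  have h0 : o < ω := h.trans h'
  have := cast_natOf h0
  have := cast_natOf h'
  have : ((natOf o : ℕ) : Ordinal) < ((natOf o' : ℕ) : Ordinal) := by
    rw [cast_natOf h0, cast_natOf h']; exact h
  exact_mod_cast this

/-- `S` contains an increasing copy of (the set of ordinals below) `c`. -/
def CopyIn (c : Ordinal) (S : Set Ordinal) : Prop :=
  ∃ f : Ordinal → Ordinal, StrictMonoOn f (Iio c) ∧ ∀ x < c, f x ∈ S

lemma CopyIn.mono {c : Ordinal} {S T : Set Ordinal} (h : CopyIn c S) (hST : S ⊆ T) :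
    CopyIn c T := by
  obtain ⟨f, hf, hm⟩ := h
  exact ⟨f, hf, fun x hx => hST (hm x hx)⟩

lemma copyIn_Ico (c L : Ordinal) : CopyIn c (Ico L (L + c)) := by
  refine ⟨fun x => L + x, fun x _ y _ hxy => add_lt_add_right hxy L, fun x hx => ?_⟩
  exact ⟨le_self_add, add_lt_add_right hx L⟩

lemma div_mono {c x y : Ordinal} (hc : c ≠ 0) (h : x ≤ y) : x / c ≤ y / c := by
  by_contra hlt
  push_neg at hlt
  have h1 : y < c * Order.succ (y / c) := lt_mul_succ_div y hc
  have h2 : Order.succ (y / c) ≤ x / c := Order.succ_le_of_lt hlt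
  have h3 : c * Order.succ (y / c) ≤ c * (x / c) := mul_le_mul_right h2 c
  have h4 : c * (x / c) ≤ x := mul_div_le x c
  exact absurd ((h1.trans_le h3).trans_le h4) (not_lt.2 h)

lemma card_opow_omega0 : ∀ {b : Ordinal.{u}}, b.card ≤ Cardinal.aleph0 →
    ((ω : Ordinal) ^ b).card ≤ Cardinal.aleph0 := by
  intro b
  induction b using Ordinal.limitRecOn with
  | zero =>
    intro _
    simp only [opow_zero, card_one]
    exact Cardinal.one_le_aleph0
  | add_one o ih =>
    intro h
    have ho : o.card ≤ Cardinal.aleph0 := le_trans (card_le_card (Order.le_succ o)) h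
    rw [add_one_eq_succ, opow_succ, card_mul, card_omega0]
    calc ((ω : Ordinal) ^ o).card * Cardinal.aleph0
        ≤ Cardinal.aleph0 * Cardinal.aleph0 := mul_le_mul' (ih ho) le_rfl
      _ = Cardinal.aleph0 := Cardinal.aleph0_mul_aleph0
  | limit o ho ih =>
    intro h
    have hcov : Iio ((ω : Ordinal) ^ o) = ⋃ c : Iio o, Iio ((ω : Ordinal) ^ (c : Ordinal)) := by
      ext x
      simp only [mem_Iio, mem_iUnion]
      constructor
      · intro hx
        obtain ⟨c, hc, hxc⟩ := (lt_opow_of_isSuccLimit omega0_ne_zero ho).1 hx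
        exact ⟨⟨c, hc⟩, hxc⟩
      · rintro ⟨⟨c, hc⟩, hxc⟩
        exact hxc.trans_le (opow_le_opow_right omega0_pos hc.le)
    haveI : Nonempty (Iio o) := ⟨⟨0, ho.pos⟩⟩
    have h2 : ∀ c : Iio o, #(Iio ((ω : Ordinal) ^ (c : Ordinal))) ≤ Cardinal.aleph0 := by
      intro c
      rw [Cardinal.mk_Iio_ordinal]
      have hcc : (c : Ordinal).card ≤ Cardinal.aleph0 := le_trans (card_le_card c.2.le) h
      have := ih c c.2 hcc
      exact Cardinal.lift_le_aleph0.2 this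
    have h1 : #(Iio ((ω : Ordinal) ^ o)) ≤ #(Iio o) * ⨆ c : Iio o,
        #(Iio ((ω : Ordinal) ^ (c : Ordinal))) := by
      rw [hcov]
      exact Cardinal.mk_iUnion_le _
    have h3 : #(Iio o) ≤ Cardinal.aleph0 := by
      rw [Cardinal.mk_Iio_ordinal]
      exact Cardinal.lift_le_aleph0.2 h
    have h4 : #(Iio ((ω : Ordinal) ^ o)) ≤ Cardinal.aleph0 := by
      calc #(Iio ((ω : Ordinal) ^ o))
          ≤ #(Iio o) * ⨆ c : Iio o, #(Iio ((ω : Ordinal) ^ (c : Ordinal))) := h1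
        _ ≤ Cardinal.aleph0 * Cardinal.aleph0 := mul_le_mul' h3 (ciSup_le' h2)
        _ = Cardinal.aleph0 := Cardinal.aleph0_mul_aleph0
    rw [Cardinal.mk_Iio_ordinal] at h4
    exact Cardinal.lift_le_aleph0.1 h4

lemma CopyIn.shift {c : Ordinal} {S : Set Ordinal} (L : Ordinal)
    (h : CopyIn c ({r | L + r ∈ S} ∩ Iio c)) : CopyIn c (S ∩ Ico L (L + c)) := by
  obtain ⟨f, hf, hm⟩ := h
  refine ⟨fun x => L + f x, fun x hx y hy hxy => add_lt_add_right (hf hx hy hxy) L,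
    fun x hx => ?_⟩
  obtain ⟨h1, h2⟩ := hm x hx
  exact ⟨h1, le_self_add, add_lt_add_right h2 L⟩

lemma glue_succ {e : Ordinal} {A : Set Ordinal} {M : Set ℕ} (hM : M.Infinite)
    (hA : ∀ n ∈ M, CopyIn ((ω : Ordinal) ^ e)
      (A ∩ Ico ((ω : Ordinal) ^ e * n) ((ω : Ordinal) ^ e * n + (ω : Ordinal) ^ e))) :
    CopyIn ((ω : Ordinal) ^ (e + 1)) (A ∩ Iio ((ω : Ordinal) ^ (e + 1))) := by
  set W : Ordinal := (ω : Ordinal) ^ e with hWdef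
  have hW0 : W ≠ 0 := (opow_pos e omega0_pos).ne'
  have hWsucc : (ω : Ordinal) ^ (e + 1) = W * ω := by
    rw [hWdef, ← opow_succ, add_one_eq_succ]
  set ν : ℕ → ℕ := Nat.nth (· ∈ M) with hν
  have hνmem : ∀ n, ν n ∈ M := fun n => Nat.nth_mem_of_infinite hM n
  have hνmono : StrictMono ν := Nat.nth_strictMono hM
  have hA' : ∀ n : ℕ, ∃ f : Ordinal → Ordinal, StrictMonoOn f (Iio W) ∧
      ∀ x < W, f x ∈ A ∩ Ico (W * (ν n)) (W * (ν n) + W) := fun n => hA (ν n) (hνmem n)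
  choose g hg1 hg2 using hA'
  have key : ∀ x < (ω : Ordinal) ^ (e + 1),
      g (natOf (x / W)) (x % W) ∈ A ∩ Ico (W * (ν (natOf (x / W)))) (W * (ν (natOf (x / W))) + W)
      := by
    intro x hx
    exact hg2 _ _ (mod_lt x hW0)
  refine ⟨fun x => g (natOf (x / W)) (x % W), ?_, ?_⟩
  · intro x hx y hy hxy
    simp only [mem_Iio] at hx hy
    have hqx : x / W < ω := (div_lt hW0).2 (by rwa [← hWsucc])
    have hqy : y / W < ω := (div_lt hW0).2 (by rwa [← hWsucc])
    rcases (div_mono hW0 hxy.le).lt_or_eq with hlt | heq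
    · have hmlt : natOf (x / W) < natOf (y / W) := natOf_lt hlt hqy
      have hb1 : g (natOf (x / W)) (x % W) < W * (ν (natOf (x / W))) + W :=
        (key x hx).2.2
      have hb2 : W * (ν (natOf (y / W))) ≤ g (natOf (y / W)) (y % W) := (key y hy).2.1
      have hstep : W * (ν (natOf (x / W))) + W ≤ W * (ν (natOf (y / W))) := by
        have h1 : ν (natOf (x / W)) + 1 ≤ ν (natOf (y / W)) := hνmono hmlt
        calc W * (ν (natOf (x / W))) + W = W * ((ν (natOf (x / W)) : Ordinal) + 1) := by
              rw [mul_add, mul_one]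
          _ = W * ((ν (natOf (x / W)) + 1 : ℕ) : Ordinal) := by
              norm_cast
          _ ≤ W * (ν (natOf (y / W))) := by
              apply mul_le_mul_right
              exact_mod_cast Nat.cast_le.2 h1
      exact hb1.trans_le (hstep.trans hb2)
    · show g (natOf (x / W)) (x % W) < g (natOf (y / W)) (y % W)
      rw [← heq]
      have hmod : x % W < y % W := by
        have hx' := div_add_mod x W
        have hy' := div_add_mod y W
        have : W * (x / W) + x % W < W * (x / W) + y % W := by
          rw [hx']
          calc x < y := hxy
            _ = W * (y / W) + y % W := hy'.symm
            _ = W * (x / W) + y % W := by rw [heq]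
        exact (add_lt_add_iff_left _).1 this
      exact hg1 _ (mod_lt x hW0) (mod_lt y hW0) hmod
  · intro x hx
    have hin := key x hx
    refine ⟨hin.1, ?_⟩
    have hb1 : g (natOf (x / W)) (x % W) < W * (ν (natOf (x / W))) + W := hin.2.2
    have : W * (ν (natOf (x / W))) + W ≤ (ω : Ordinal) ^ (e + 1) := by
      rw [hWsucc]
      calc W * (ν (natOf (x / W))) + W = W * ((ν (natOf (x / W)) + 1 : ℕ) : Ordinal) := by
            push_cast
            rw [mul_add, mul_one]
        _ ≤ W * ω := mul_le_mul_right (nat_lt_omega0 _).le W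
    exact hb1.trans_le this

lemma glue_limit {e : Ordinal} (he : Order.IsSuccLimit e) (hec : e.card ≤ Cardinal.aleph0)
    {A : Set Ordinal} (P : Set Ordinal) (hPe : ∀ w ∈ P, w < e)
    (hcof : ∀ z < e, ∃ w ∈ P, z < w)
    (hPA : ∀ w ∈ P, CopyIn ((ω : Ordinal) ^ w)
      (A ∩ Ico ((ω : Ordinal) ^ w) ((ω : Ordinal) ^ w + (ω : Ordinal) ^ w))) :
    CopyIn ((ω : Ordinal) ^ e) (A ∩ Iio ((ω : Ordinal) ^ e)) := by
  -- a countable enumeration of `Iio e`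
  have hcnt : (Iio e).Countable := by
    rw [← Cardinal.le_aleph0_iff_set_countable, Cardinal.mk_Iio_ordinal]
    exact Cardinal.lift_le_aleph0.2 hec
  obtain ⟨u, hu⟩ := hcnt.exists_eq_range ⟨0, he.pos⟩
  have hu' : ∀ m, u m < e := by
    intro m
    have : u m ∈ Iio e := by rw [hu]; exact mem_range_self m
    exact this
  -- a strictly increasing cofinal sequence in `P`
  have hrec' : ∀ (s : {o : Ordinal // o ∈ P}) (n : ℕ),
      ∃ w : {o : Ordinal // o ∈ P}, max s.1 (u n) < w.1 := by
    rintro ⟨w0, hw0⟩ n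
    have hmax : max w0 (u n) < e := max_lt (hPe w0 hw0) (hu' n)
    obtain ⟨w, hw, hlt⟩ := hcof _ hmax
    exact ⟨⟨w, hw⟩, hlt⟩
  obtain ⟨w0, hw0P, _⟩ := hcof 0 he.pos
  let v : ℕ → {o : Ordinal // o ∈ P} := fun n =>
    Nat.rec ⟨w0, hw0P⟩ (fun n prev => Classical.choose (hrec' prev n)) n
  have hvsucc : ∀ n, max ((v n).1) (u n) < (v (n + 1)).1 := by
    intro n
    exact Classical.choose_spec (hrec' (v n) n)
  have hvP : ∀ n, (v n).1 ∈ P := fun n => (v n).2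
  have hvlt : ∀ n, (v n).1 < e := fun n => hPe _ (hvP n)
  have hvmono : StrictMono (fun n => (v n).1) := by
    apply strictMono_nat_of_lt_succ
    intro n
    exact (le_max_left _ _).trans_lt (hvsucc n)
  have hvdom : ∀ n, u n < (v (n + 1)).1 := fun n =>
    (le_max_right _ _).trans_lt (hvsucc n)
  -- embeddings into the pieces
  have hA' : ∀ n : ℕ, ∃ f : Ordinal → Ordinal,
      StrictMonoOn f (Iio ((ω : Ordinal) ^ (v n).1)) ∧
      ∀ x < (ω : Ordinal) ^ (v n).1, f x ∈ A ∩
        Ico ((ω : Ordinal) ^ (v n).1)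
          ((ω : Ordinal) ^ (v n).1 + (ω : Ordinal) ^ (v n).1) :=
    fun n => hPA _ (hvP n)
  choose g hg1 hg2 using hA'
  -- the least index whose piece can accommodate `x`
  have hex : ∀ x < (ω : Ordinal) ^ e, {n : ℕ | x < (ω : Ordinal) ^ (v n).1}.Nonempty := by
    intro x hx
    obtain ⟨c, hc, hxc⟩ := (lt_opow_of_isSuccLimit omega0_ne_zero he).1 hx
    have : c ∈ Iio e := hc
    rw [hu] at this
    obtain ⟨m, hm⟩ := this
    refine ⟨m + 1, ?_⟩
    have : (ω : Ordinal) ^ c ≤ (ω : Ordinal) ^ (v (m + 1)).1 :=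
      opow_le_opow_right omega0_pos (by rw [← hm]; exact (hvdom m).le)
    exact hxc.trans_le this
  set N : Ordinal → ℕ := fun x => sInf {n : ℕ | x < (ω : Ordinal) ^ (v n).1} with hN
  have hN1 : ∀ x, x < (ω : Ordinal) ^ e → x < (ω : Ordinal) ^ (v (N x)).1 :=
    fun x hx => Nat.sInf_mem (hex x hx)
  have hNmono : ∀ x y, x ≤ y → y < (ω : Ordinal) ^ e → N x ≤ N y := by
    intro x y hxy hy
    apply Nat.sInf_le
    exact hxy.trans_lt (hN1 y hy)
  have hbound : ∀ n, (ω : Ordinal) ^ (v n).1 + (ω : Ordinal) ^ (v n).1 ≤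
      (ω : Ordinal) ^ e := by
    intro n
    have h1 : (ω : Ordinal) ^ (v n).1 < (ω : Ordinal) ^ ((v n).1 + 1) := by
      rw [opow_lt_opow_iff_right one_lt_omega0]
      exact lt_add_one _
    have h2 : (ω : Ordinal) ^ ((v n).1 + 1) ≤ (ω : Ordinal) ^ e := by
      apply opow_le_opow_right omega0_pos
      rw [add_one_eq_succ]
      exact (he.succ_lt (hvlt n)).le
    exact ((principal_add_omega0_opow _ h1 h1).trans_le h2).le
  refine ⟨fun x => g (N x) x, ?_, ?_⟩
  · intro x hx y hy hxy
    simp only [mem_Iio] at hx hy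
    rcases (hNmono x y hxy.le hy).lt_or_eq with hlt | heq
    · show g (N x) x < g (N y) y
      have hb1 : g (N x) x < (ω : Ordinal) ^ (v (N x)).1 +
          (ω : Ordinal) ^ (v (N x)).1 := (hg2 (N x) x (hN1 x hx)).2.2
      have hb2 : (ω : Ordinal) ^ (v (N y)).1 ≤ g (N y) y := (hg2 (N y) y (hN1 y hy)).2.1
      have hvv : (v (N x)).1 < (v (N y)).1 := hvmono hlt
      have hmid : (ω : Ordinal) ^ (v (N x)).1 + (ω : Ordinal) ^ (v (N x)).1 ≤
          (ω : Ordinal) ^ (v (N y)).1 := by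
        have h1 : (ω : Ordinal) ^ (v (N x)).1 <
            (ω : Ordinal) ^ ((v (N x)).1 + 1) := by
          rw [opow_lt_opow_iff_right one_lt_omega0]
          exact lt_add_one _
        have h2 : (ω : Ordinal) ^ ((v (N x)).1 + 1) ≤
            (ω : Ordinal) ^ (v (N y)).1 := by
          apply opow_le_opow_right omega0_pos
          rw [add_one_eq_succ]
          exact Order.succ_le_of_lt hvv
        exact ((principal_add_omega0_opow _ h1 h1).trans_le h2).le
      exact hb1.trans_le (hmid.trans hb2)
    · show g (N x) x < g (N y) y
      rw [heq]
      have hyN : y < (ω : Ordinal) ^ (v (N y)).1 := hN1 y hy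
      have hxN : x < (ω : Ordinal) ^ (v (N y)).1 := hxy.trans hyN
      exact hg1 (N y) hxN hyN hxy
  · intro x hx
    have hin := hg2 (N x) x (hN1 x hx)
    refine ⟨hin.1, ?_⟩
    exact hin.2.2.trans_le (hbound (N x))

/-- The key pigeonhole: `ω^a → (ω^a)¹₂` in the form of subsets of the ordinals. -/
lemma pigeon : ∀ {a : Ordinal}, a.card ≤ Cardinal.aleph0 → ∀ (A B : Set Ordinal),
    Iio ((ω : Ordinal) ^ a) ⊆ A ∪ B →
    CopyIn ((ω : Ordinal) ^ a) (A ∩ Iio ((ω : Ordinal) ^ a)) ∨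
      CopyIn ((ω : Ordinal) ^ a) (B ∩ Iio ((ω : Ordinal) ^ a)) := by
  intro a
  induction a using Ordinal.limitRecOn with
  | zero =>
    intro _ A B hAB
    rw [opow_zero] at hAB ⊢
    have h0 : (0 : Ordinal) ∈ A ∪ B := hAB (by simp [zero_lt_one])
    have hf : ∀ S : Set Ordinal, (0 : Ordinal) ∈ S → CopyIn 1 (S ∩ Iio 1) := by
      intro S hS
      refine ⟨fun _ => 0, ?_, ?_⟩
      · intro x hx y hy hxy
        simp only [mem_Iio, Ordinal.lt_one_iff_zero] at hx hy
        subst hx; subst hy; exact absurd hxy (lt_irrefl 0)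
      · intro x hx
        exact ⟨hS, by simp [zero_lt_one]⟩
    rcases h0 with h0 | h0
    · exact Or.inl (hf A h0)
    · exact Or.inr (hf B h0)
  | add_one e ih =>
    intro h A B hAB
    have he : e.card ≤ Cardinal.aleph0 := le_trans (card_le_card (Order.le_succ e)) h
    set W : Ordinal := (ω : Ordinal) ^ e with hWdef
    have hblock : ∀ n : ℕ, CopyIn W (A ∩ Ico (W * n) (W * n + W)) ∨
        CopyIn W (B ∩ Ico (W * n) (W * n + W)) := by
      intro n
      have hcov : Iio W ⊆ {r | W * n + r ∈ A} ∪ {r | W * n + r ∈ B} := by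
        intro r hr
        have hlt : W * n + r < (ω : Ordinal) ^ (Order.succ e) := by
          rw [opow_succ]
          calc W * (n : Ordinal) + r < W * (n : Ordinal) + W := add_lt_add_right hr _
            _ = W * ((n : Ordinal) + 1) := by rw [mul_add, mul_one]
            _ = W * (((n + 1 : ℕ) : ℕ) : Ordinal) := by norm_cast
            _ ≤ W * ω := mul_le_mul_right (nat_lt_omega0 _).le _
        rcases hAB hlt with hm | hm
        · exact Or.inl hm
        · exact Or.inr hm
      rcases ih he _ _ hcov with h' | h'
      · exact Or.inl (CopyIn.shift _ h')
      · exact Or.inr (CopyIn.shift _ h')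
    set MA : Set ℕ := {n : ℕ | CopyIn W (A ∩ Ico (W * n) (W * n + W))} with hMA
    set MB : Set ℕ := {n : ℕ | CopyIn W (B ∩ Ico (W * n) (W * n + W))} with hMB
    have hU : ∀ n : ℕ, n ∈ MA ∪ MB := fun n => (hblock n).imp id id
    have hinf : MA.Infinite ∨ MB.Infinite := by
      rw [← Set.infinite_union]
      exact Set.infinite_univ.mono (fun n _ => hU n)
    rcases hinf with hM | hM
    · left
      have := glue_succ hM (fun n hn => hn)
      rwa [add_one_eq_succ] at this
    · right
      have := glue_succ hM (fun n hn => hn)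
      rwa [add_one_eq_succ] at this
  | limit e he ih =>
    intro h A B hAB
    have hbound2 : ∀ w, w < e →
        (ω : Ordinal) ^ w + (ω : Ordinal) ^ w ≤ (ω : Ordinal) ^ e := by
      intro w hw
      have h1 : (ω : Ordinal) ^ w < (ω : Ordinal) ^ (w + 1) := by
        rw [opow_lt_opow_iff_right one_lt_omega0]
        exact lt_add_one _
      have h2 : (ω : Ordinal) ^ (w + 1) ≤ (ω : Ordinal) ^ e := by
        apply opow_le_opow_right omega0_pos
        rw [add_one_eq_succ]
        exact (he.succ_lt hw).le
      exact ((principal_add_omega0_opow _ h1 h1).trans_le h2).le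
    have hpiece : ∀ w, w < e →
        CopyIn ((ω : Ordinal) ^ w) (A ∩ Ico ((ω : Ordinal) ^ w)
          ((ω : Ordinal) ^ w + (ω : Ordinal) ^ w)) ∨
        CopyIn ((ω : Ordinal) ^ w) (B ∩ Ico ((ω : Ordinal) ^ w)
          ((ω : Ordinal) ^ w + (ω : Ordinal) ^ w)) := by
      intro w hw
      have hcov : Iio ((ω : Ordinal) ^ w) ⊆
          {r | (ω : Ordinal) ^ w + r ∈ A} ∪ {r | (ω : Ordinal) ^ w + r ∈ B} := by
        intro r hr
        have hlt : (ω : Ordinal) ^ w + r < (ω : Ordinal) ^ e :=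
          (add_lt_add_right hr _).trans_le (hbound2 w hw)
        rcases hAB hlt with hm | hm
        · exact Or.inl hm
        · exact Or.inr hm
      rcases ih w hw (le_trans (card_le_card hw.le) h) _ _ hcov with h' | h'
      · exact Or.inl (CopyIn.shift _ h')
      · exact Or.inr (CopyIn.shift _ h')
    set P : Set Ordinal := {w | w < e ∧ CopyIn ((ω : Ordinal) ^ w)
      (A ∩ Ico ((ω : Ordinal) ^ w) ((ω : Ordinal) ^ w + (ω : Ordinal) ^ w))} with hP
    set Q : Set Ordinal := {w | w < e ∧ CopyIn ((ω : Ordinal) ^ w)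
      (B ∩ Ico ((ω : Ordinal) ^ w) ((ω : Ordinal) ^ w + (ω : Ordinal) ^ w))} with hQ
    have hPQ : ∀ w, w < e → w ∈ P ∪ Q := fun w hw =>
      (hpiece w hw).imp (fun hc => ⟨hw, hc⟩) (fun hc => ⟨hw, hc⟩)
    have hcof : (∀ z < e, ∃ w ∈ P, z < w) ∨ (∀ z < e, ∃ w ∈ Q, z < w) := by
      by_contra hcon
      push_neg at hcon
      obtain ⟨⟨z1, hz1, hb1⟩, ⟨z2, hz2, hb2⟩⟩ := hcon
      have hm : max z1 z2 + 1 < e := by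
        rw [add_one_eq_succ]
        exact he.succ_lt (max_lt hz1 hz2)
      rcases hPQ _ hm with hw | hw
      · exact absurd (hb1 _ hw) (not_le.2 ((le_max_left z1 z2).trans_lt (lt_add_one _)))
      · exact absurd (hb2 _ hw) (not_le.2 ((le_max_right z1 z2).trans_lt (lt_add_one _)))
    rcases hcof with hc | hc
    · exact Or.inl (glue_limit he h P (fun w hw => hw.1) hc (fun w hw => hw.2))
    · exact Or.inr (glue_limit he h Q (fun w hw => hw.1) hc (fun w hw => hw.2))

lemma union_split {a : Ordinal} (ha : a.card ≤ Cardinal.aleph0) {W S T : Set Ordinal}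
    (hW : CopyIn ((ω : Ordinal) ^ a) W) (hsub : W ⊆ S ∪ T) :
    CopyIn ((ω : Ordinal) ^ a) S ∨ CopyIn ((ω : Ordinal) ^ a) T := by
  obtain ⟨f, hf, hm⟩ := hW
  have hcov : Iio ((ω : Ordinal) ^ a) ⊆ {x | f x ∈ S} ∪ {x | f x ∈ T} := by
    intro x hx
    rcases hsub (hm x hx) with h | h
    · exact Or.inl h
    · exact Or.inr h
  rcases pigeon ha _ _ hcov with h | h
  · obtain ⟨g, hg, hgm⟩ := h
    exact Or.inl ⟨f ∘ g, fun x hx y hy hxy => hf (hgm x hx).2 (hgm y hy).2 (hg hx hy hxy),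
      fun x hx => (hgm x hx).1⟩
  · obtain ⟨g, hg, hgm⟩ := h
    exact Or.inr ⟨f ∘ g, fun x hx y hy hxy => hf (hgm x hx).2 (hgm y hy).2 (hg hx hy hxy),
      fun x hx => (hgm x hx).1⟩

lemma union_split_finite {a : Ordinal} (ha : a.card ≤ Cardinal.aleph0) (ha0 : a ≠ 0) :
    ∀ (n : ℕ) (F : ℕ → Set Ordinal) (W : Set Ordinal), CopyIn ((ω : Ordinal) ^ a) W →
      (W ⊆ ⋃ s ∈ Finset.range n, F s) → ∃ s < n, CopyIn ((ω : Ordinal) ^ a) (F s) := by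
  intro n
  induction n with
  | zero =>
    intro F W hW hsub
    obtain ⟨f, _, hm⟩ := hW
    have h0 : (0 : Ordinal) < (ω : Ordinal) ^ a := opow_pos a omega0_pos
    have := hsub (hm 0 h0)
    simp at this
  | succ n ih =>
    intro F W hW hsub
    have hsub' : W ⊆ (⋃ s ∈ Finset.range n, F s) ∪ F n := by
      intro x hx
      have := hsub hx
      simp only [Finset.mem_range, mem_iUnion] at this ⊢
      obtain ⟨s, hs, hxs⟩ := this
      rcases Nat.lt_succ_iff_lt_or_eq.1 hs with h | h
      · exact Or.inl (by simpa using ⟨s, h, hxs⟩)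
      · exact Or.inr (h ▸ hxs)
    rcases union_split ha hW hsub' with h | h
    · obtain ⟨s, hs, hcs⟩ := ih F _ h (fun x hx => hx)
      exact ⟨s, hs.trans (Nat.lt_succ_self n), hcs⟩
    · exact ⟨n, Nat.lt_succ_self n, h⟩

/-- The "blue neighborhood" of `x`: points joined to `x` by a blue pair. -/
def nb (c : Ordinal → Ordinal → Bool) (x : Ordinal) : Set Ordinal :=
  {y | (x < y ∧ c x y = false) ∨ (y < x ∧ c y x = false)}

lemma orderCopy_image {d : Ordinal} {D : Ordinal} {f : Ordinal → Ordinal}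
    {X : Set Ordinal} (hXsub : X ⊆ Iio D) (hf : StrictMonoOn f (Iio D))
    (hcopy : IsOrderCopy X d) : IsOrderCopy (f '' X) d := by
  obtain ⟨iso⟩ := hcopy
  have hE : ∀ x : X, f (x : Ordinal) ∈ f '' X := fun x => mem_image_of_mem f x.2
  let E : X → (f '' X : Set Ordinal) := fun x => ⟨f x, hE x⟩
  have hEmono : StrictMono E := by
    intro x y hxy
    exact hf (hXsub x.2) (hXsub y.2) hxy
  have hEsurj : Function.Surjective E := by
    rintro ⟨_, ⟨x, hx, rfl⟩⟩
    exact ⟨⟨x, hx⟩, rfl⟩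
  exact ⟨(StrictMono.orderIsoOfSurjective E hEmono hEsurj).symm.trans iso⟩

lemma strictMonoOn_lt_iff {D : Ordinal} {f : Ordinal → Ordinal}
    (hf : StrictMonoOn f (Iio D)) {x y : Ordinal} (hx : x < D) (hy : y < D)
    (hlt : f x < f y) : x < y := by
  rcases lt_trichotomy x y with h | h | h
  · exact h
  · subst h; exact absurd hlt (lt_irrefl _)
  · exact absurd (hf hy hx h) (not_lt.2 hlt.le)

lemma transfer {a d γ : Ordinal} (c : Ordinal → Ordinal → Bool) {Y : Set Ordinal}
    (hY : Y ⊆ Iio γ) (f : Ordinal → Ordinal)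
    (hf : StrictMonoOn f (Iio ((ω : Ordinal) ^ a)))
    (hm : ∀ x < (ω : Ordinal) ^ a, f x ∈ Y) (k : ℕ)
    (h : ToPlain2 ((ω : Ordinal) ^ a) d k) :
    (∃ X ⊆ Iio γ, IsOrderCopy X d ∧ Homog c true X) ∨
      (∃ H : Finset Ordinal, (H : Set Ordinal) ⊆ Y ∧ H.card = k ∧
        Homog c false (H : Set Ordinal)) := by
  set c' : Ordinal → Ordinal → Bool := fun u v => c (f u) (f v) with hc'
  rcases h c' with ⟨X, hXsub, hXcopy, hXhom⟩ | ⟨H, hHsub, hHcard, hHhom⟩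
  · left
    refine ⟨f '' X, ?_, orderCopy_image hXsub hf hXcopy, ?_⟩
    · rintro _ ⟨x, hx, rfl⟩
      exact hY (hm x (hXsub hx))
    · rintro _ ⟨x, hx, rfl⟩ _ ⟨y, hy, rfl⟩ huv
      have hxy : x < y := strictMonoOn_lt_iff hf (hXsub hx) (hXsub hy) huv
      exact hXhom x hx y hy hxy
  · right
    refine ⟨H.image f, ?_, ?_, ?_⟩
    · intro y hy
      simp only [Finset.coe_image, mem_image] at hy
      obtain ⟨x, hx, rfl⟩ := hy
      exact hm x (hHsub hx)
    · rw [Finset.card_image_of_injOn, hHcard]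
      exact (hf.injOn).mono hHsub
    · intro u hu v hv huv
      simp only [Finset.coe_image, mem_image] at hu hv
      obtain ⟨x, hx, rfl⟩ := hu
      obtain ⟨y, hy, rfl⟩ := hv
      have hxy : x < y := strictMonoOn_lt_iff hf (hHsub hx) (hHsub hy) huv
      exact hHhom x hx y hy hxy

section BuildRed

variable {a b : Ordinal} (c : Ordinal → Ordinal → Bool) (e : ℕ → Ordinal)

/-- The requirements on the `s`-th chosen point of the recursion. -/
def GoodAt (a : Ordinal) (c : Ordinal → Ordinal → Bool) (e : ℕ → Ordinal)
    (p : ℕ → Ordinal) (s : ℕ) (y : Ordinal) : Prop :=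
  y ∈ Ico ((ω : Ordinal) ^ a * e s) ((ω : Ordinal) ^ a * e s + (ω : Ordinal) ^ a) ∧
    (∀ s' < s, e s' = e s → p s' < y) ∧ (∀ s' < s, y ∉ nb c (p s'))

lemma goodAt_congr {p q : ℕ → Ordinal} {s : ℕ} (hpq : ∀ j < s, p j = q j) {y : Ordinal}
    (h : GoodAt a c e p s y) : GoodAt a c e q s y := by
  obtain ⟨h1, h2, h3⟩ := h
  refine ⟨h1, ?_, ?_⟩
  · intro s' hs' hee
    rw [← hpq s' hs']
    exact h2 s' hs' hee
  · intro s' hs'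
    rw [← hpq s' hs']
    exact h3 s' hs'

lemma buildRed (ha0 : a ≠ 0) (hb0 : b ≠ 0) (hac : a.card ≤ Cardinal.aleph0)
    (hbc : b.card ≤ Cardinal.aleph0)
    (hsmall : ∀ x < (ω : Ordinal) ^ (a + b),
      ¬ CopyIn ((ω : Ordinal) ^ a) (nb c x ∩ Iio ((ω : Ordinal) ^ (a + b)))) :
    ∃ X ⊆ Iio ((ω : Ordinal) ^ (a + b)),
      IsOrderCopy X ((ω : Ordinal) ^ (1 + b)) ∧ Homog c true X := by
  have hγ : (ω : Ordinal) ^ (a + b) = (ω : Ordinal) ^ a * (ω : Ordinal) ^ b := opow_add ω a b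
  have hδ : (ω : Ordinal) ^ (1 + b) = ω * (ω : Ordinal) ^ b := opow_one_add ω b
  have hWlim : Order.IsSuccLimit ((ω : Ordinal) ^ a) := isSuccLimit_opow_left isSuccLimit_omega0 ha0
  have hW0 : ((ω : Ordinal) ^ a) ≠ 0 := (opow_pos a omega0_pos).ne'
  -- countable enumeration of block indices, each hit infinitely often
  have hcnt : (Iio ((ω : Ordinal) ^ b)).Countable := by
    rw [← Cardinal.le_aleph0_iff_set_countable, Cardinal.mk_Iio_ordinal]
    exact Cardinal.lift_le_aleph0.2 (card_opow_omega0 hbc)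
  obtain ⟨u, hu⟩ := hcnt.exists_eq_range ⟨0, opow_pos b omega0_pos⟩
  set e : ℕ → Ordinal := fun t => u (Nat.unpair t).1 with hedef
  have he : ∀ t, e t < (ω : Ordinal) ^ b := by
    intro t
    have : u (Nat.unpair t).1 ∈ Iio ((ω : Ordinal) ^ b) := by
      rw [hu]; exact mem_range_self _
    exact this
  have hsur : ∀ i < (ω : Ordinal) ^ b, {t : ℕ | e t = i}.Infinite := by
    intro i hi
    have : i ∈ Iio ((ω : Ordinal) ^ b) := hi
    rw [hu] at this
    obtain ⟨m, hm⟩ := this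
    apply Set.infinite_of_injective_forall_mem (f := fun n : ℕ => Nat.pair m n)
    · intro n n' hnn'
      have := congrArg (fun t => (Nat.unpair t).2) hnn'
      simpa [Nat.unpair_pair] using this
    · intro n
      show e (Nat.pair m n) = i
      rw [hedef]
      simp [Nat.unpair_pair, hm]
  -- bound: every point in block `e s` is below `ω ^ (a + b)`
  have hblkγ : ∀ i, i < (ω : Ordinal) ^ b →
      (ω : Ordinal) ^ a * i + (ω : Ordinal) ^ a ≤ (ω : Ordinal) ^ (a + b) := by
    intro i hi
    rw [hγ, ← mul_add_one]
    apply mul_le_mul_right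
    rw [add_one_eq_succ]
    exact Order.succ_le_of_lt hi
  -- the one-step existence lemma
  have hstep : ∀ (p : ℕ → Ordinal) (t : ℕ), (∀ s < t, GoodAt a c e p s (p s)) →
      ∃ y, GoodAt a c e p t y := by
    intro p t hgood
    set W : Ordinal := (ω : Ordinal) ^ a with hWdef
    set i : Ordinal := e t with hidef
    have hpblk : ∀ s, s < t → p s < W * e s + W := fun s hs => (hgood s hs).1.2
    have hpγ : ∀ s, s < t → p s < (ω : Ordinal) ^ (a + b) := fun s hs =>
      (hpblk s hs).trans_le (hblkγ _ (he s))
    set Lsup : Ordinal := (Finset.range t).sup (fun s => if e s = i then p s + 1 else 0)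
      with hLsupdef
    set L : Ordinal := max (W * i) Lsup with hLdef
    have hL1 : W * i ≤ L := le_max_left _ _
    have htoplim : Order.IsSuccLimit (W * i + W) := isSuccLimit_add _ hWlim
    have htoppos : (⊥ : Ordinal) < W * i + W := by
      rw [Ordinal.bot_eq_zero]
      exact lt_of_lt_of_le (opow_pos a omega0_pos) le_add_self
    have hLlt : L < W * i + W := by
      apply max_lt
      · exact lt_add_of_pos_right _ (opow_pos a omega0_pos)
      · rw [Finset.sup_lt_iff htoppos]
        intro s hs
        by_cases hei : e s = i
        · rw [if_pos hei]
          have hps : p s < W * i + W := by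
            rw [← hei]
            exact hpblk s (Finset.mem_range.1 hs)
          rw [add_one_eq_succ]
          exact htoplim.succ_lt hps
        · rw [if_neg hei]
          exact htoppos.trans_le' (le_of_eq Ordinal.bot_eq_zero.symm)
    have hLrep : W * i + (L - W * i) = L := Ordinal.add_sub_cancel_of_le hL1
    have hr : L - W * i < W := Ordinal.sub_lt_of_lt_add hLlt (opow_pos a omega0_pos)
    have htop : L + W = W * i + W := by
      calc L + W = W * i + ((L - W * i) + W) := by rw [← add_assoc, hLrep]
        _ = W * i + W := by rw [add_omega0_opow hr]
    have hbad : ¬ (Ico L (L + W) ⊆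
        ⋃ s ∈ Finset.range t, (nb c (p s) ∩ Iio ((ω : Ordinal) ^ (a + b)))) := by
      intro hsub
      obtain ⟨s, hst, hcs⟩ := union_split_finite hac ha0 t
        (fun s => nb c (p s) ∩ Iio ((ω : Ordinal) ^ (a + b))) (Ico L (L + W))
        (copyIn_Ico W L) hsub
      exact hsmall (p s) (hpγ s hst) hcs
    obtain ⟨y, hyIco, hyn⟩ := not_subset.1 hbad
    have hytop : y < W * i + W := by rw [← htop]; exact hyIco.2
    have hyγ : y < (ω : Ordinal) ^ (a + b) := hytop.trans_le (hblkγ i (he t))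
    refine ⟨y, ⟨hL1.trans hyIco.1, hytop⟩, ?_, ?_⟩
    · intro s hs hee
      have hle : (if e s = i then p s + 1 else 0) ≤ Lsup :=
        Finset.le_sup (f := fun s => if e s = i then p s + 1 else 0) (Finset.mem_range.2 hs)
      rw [if_pos hee] at hle
      have hy' : p s + 1 ≤ y := hle.trans ((le_max_right _ _).trans hyIco.1)
      rw [add_one_eq_succ] at hy'
      exact Order.succ_le_iff.1 hy'
    · intro s hs hymem
      apply hyn
      simp only [mem_iUnion]
      exact ⟨s, Finset.mem_range.2 hs, hymem, hyγ⟩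
  -- construct the sequence by recursion
  let A : ∀ t : ℕ, {f : ℕ → Ordinal // ∀ s < t, GoodAt a c e f s (f s)} := fun t =>
    Nat.rec ⟨fun _ => 0, fun s hs => absurd hs (Nat.not_lt_zero s)⟩
      (fun t prev =>
        ⟨Function.update prev.1 t (Classical.choose (hstep prev.1 t prev.2)), by
          have hy := Classical.choose_spec (hstep prev.1 t prev.2)
          intro s hs
          rcases Nat.lt_succ_iff_lt_or_eq.1 hs with hlt | heq
          · have h2 : GoodAt a c e
                (Function.update prev.1 t (Classical.choose (hstep prev.1 t prev.2))) s
                (prev.1 s) :=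
              goodAt_congr c e (fun j hj =>
                (Function.update_of_ne (show j ≠ t by omega)
                  (Classical.choose (hstep prev.1 t prev.2)) prev.1).symm) (prev.2 s hlt)
            rwa [Function.update_of_ne (by omega : s ≠ t)]
          · subst heq
            have h2 : GoodAt a c e
                (Function.update prev.1 s (Classical.choose (hstep prev.1 s prev.2))) s
                (Classical.choose (hstep prev.1 s prev.2)) :=
              goodAt_congr c e (fun j hj =>
                (Function.update_of_ne (show j ≠ s by omega)
                  (Classical.choose (hstep prev.1 s prev.2)) prev.1).symm) hy
            rwa [Function.update_self]⟩) t
  set p : ℕ → Ordinal := fun t => (A (t + 1)).1 t with hpdef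
  have hAsucc : ∀ t, (A (t + 1)).1 =
      Function.update (A t).1 t (Classical.choose (hstep (A t).1 t (A t).2)) := fun t => rfl
  have hagree : ∀ t j, j < t → (A t).1 j = p j := by
    intro t
    induction t with
    | zero => intro j hj; exact absurd hj (Nat.not_lt_zero j)
    | succ t ih =>
      intro j hj
      rcases Nat.lt_succ_iff_lt_or_eq.1 hj with hlt | heq
      · rw [hAsucc t, Function.update_of_ne (by omega : j ≠ t)]
        exact ih j hlt
      · subst heq
        rfl
  have hGoodp : ∀ s, GoodAt a c e p s (p s) := by
    intro s
    have h := (A (s + 1)).2 s (lt_add_one s)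
    exact goodAt_congr c e (fun j hj => hagree (s + 1) j (by omega)) h
  -- properties of the sequence
  have hpblk : ∀ t, p t ∈ Ico ((ω : Ordinal) ^ a * e t)
      ((ω : Ordinal) ^ a * e t + (ω : Ordinal) ^ a) := fun t => (hGoodp t).1
  have hpγ : ∀ t, p t < (ω : Ordinal) ^ (a + b) := fun t =>
    (hpblk t).2.trans_le (hblkγ _ (he t))
  have hpord : ∀ s t, s < t → e s = e t → p s < p t := fun s t hst hee =>
    (hGoodp t).2.1 s hst hee
  have hpnb : ∀ s t, s < t → p t ∉ nb c (p s) := fun s t hst => (hGoodp t).2.2 s hst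
  have hpblocks : ∀ s t, e s < e t → p s < p t := by
    intro s t hee
    calc p s < (ω : Ordinal) ^ a * e s + (ω : Ordinal) ^ a := (hpblk s).2
      _ = (ω : Ordinal) ^ a * (e s + 1) := by rw [mul_add_one]
      _ ≤ (ω : Ordinal) ^ a * e t := by
          apply mul_le_mul_right
          rw [add_one_eq_succ]
          exact Order.succ_le_of_lt hee
      _ ≤ p t := (hpblk t).1
  refine ⟨range p, ?_, ?_, ?_⟩
  · rintro _ ⟨t, rfl⟩
    exact hpγ t
  · -- order copy of ω ^ (1 + b)
    set F : Ordinal → Ordinal := fun w => p (Nat.nth (fun t => e t = w / ω) (natOf (w % ω)))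
      with hFdef
    have hq : ∀ w, w < (ω : Ordinal) ^ (1 + b) → w / ω < (ω : Ordinal) ^ b := by
      intro w hw
      rw [hδ] at hw
      exact (div_lt omega0_ne_zero).2 hw
    have hFblk : ∀ w, w < (ω : Ordinal) ^ (1 + b) →
        e (Nat.nth (fun t => e t = w / ω) (natOf (w % ω))) = w / ω := by
      intro w hw
      exact Nat.nth_mem_of_infinite (hsur _ (hq w hw)) _
    have hFmono : StrictMonoOn F (Iio ((ω : Ordinal) ^ (1 + b))) := by
      intro w hw w' hw' hww'
      simp only [mem_Iio] at hw hw'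
      rcases (div_mono omega0_ne_zero hww'.le).lt_or_eq with hlt | heq
      · show F w < F w'
        apply hpblocks
        rw [hFblk w hw, hFblk w' hw']
        exact hlt
      · show F w < F w'
        have hmod : w % ω < w' % ω := by
          have h1 := div_add_mod w ω
          have h2 := div_add_mod w' ω
          have h3 : ω * (w / ω) + w % ω < ω * (w / ω) + w' % ω := by
            rw [h1]
            calc w < w' := hww'
              _ = ω * (w' / ω) + w' % ω := h2.symm
              _ = ω * (w / ω) + w' % ω := by rw [heq]
          exact (add_lt_add_iff_left _).1 h3
        have hnlt : natOf (w % ω) < natOf (w' % ω) :=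
          natOf_lt hmod (mod_lt _ omega0_ne_zero)
        have hinf := hsur _ (hq w' hw')
        have hFw : F w = p (Nat.nth (fun t => e t = w' / ω) (natOf (w % ω))) := by
          rw [hFdef]
          simp only
          rw [heq]
        rw [hFw]
        apply hpord
        · exact (Nat.nth_lt_nth hinf).2 hnlt
        · rw [Nat.nth_mem_of_infinite hinf (natOf (w % ω)),
            Nat.nth_mem_of_infinite hinf (natOf (w' % ω))]
    have hFsurj : ∀ x ∈ range p, ∃ w, w < (ω : Ordinal) ^ (1 + b) ∧ F w = x := by
      rintro _ ⟨t, rfl⟩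
      haveI : DecidablePred (fun t' => e t' = e t) := Classical.decPred _
      set n := Nat.count (fun t' => e t' = e t) t with hndef
      refine ⟨ω * e t + n, ?_, ?_⟩
      · rw [hδ]
        calc ω * e t + (n : Ordinal) < ω * e t + ω := add_lt_add_right (nat_lt_omega0 n) _
          _ = ω * (e t + 1) := by rw [mul_add_one]
          _ ≤ ω * (ω : Ordinal) ^ b := mul_le_mul_right
              (by rw [add_one_eq_succ]; exact Order.succ_le_of_lt (he t)) _
      · have hdiv : (ω * e t + (n : Ordinal)) / ω = e t := by
          rw [mul_add_div _ omega0_ne_zero, div_eq_zero_of_lt (nat_lt_omega0 n), add_zero]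
        have hmodeq : (ω * e t + (n : Ordinal)) % ω = (n : Ordinal) := by
          rw [mul_add_mod_self, mod_eq_of_lt (nat_lt_omega0 n)]
        rw [hFdef]
        simp only
        rw [hdiv, hmodeq, natOf_cast]
        congr 1
        exact Nat.nth_count (p := fun t' => e t' = e t) rfl
    have hmem2 : ∀ w : (Iio ((ω : Ordinal) ^ (1 + b)) : Set Ordinal), F w.1 ∈ range p :=
      fun w => mem_range_self _
    let E : (Iio ((ω : Ordinal) ^ (1 + b)) : Set Ordinal) → (range p : Set Ordinal) :=
      fun w => ⟨F w.1, hmem2 w⟩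
    have hEmono : StrictMono E := by
      intro w w' hww'
      have h1 : F w.1 < F w'.1 := hFmono w.2 w'.2 hww'
      exact h1
    have hEsurj : Function.Surjective E := by
      rintro ⟨x, hx⟩
      obtain ⟨w, hw, hFw⟩ := hFsurj x hx
      exact ⟨⟨w, hw⟩, Subtype.ext hFw⟩
    exact ⟨(StrictMono.orderIsoOfSurjective E hEmono hEsurj).symm⟩
  · -- red homogeneity
    rintro _ ⟨s, rfl⟩ _ ⟨t, rfl⟩ huv
    rcases lt_trichotomy s t with hst | hst | hst
    · have := hpnb s t hst
      rw [nb, mem_setOf_eq] at this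
      push_neg at this
      by_contra hne
      have hfalse : c (p s) (p t) = false := by
        cases hcv : c (p s) (p t)
        · rfl
        · exact absurd hcv hne
      exact absurd hfalse (this.1 huv)
    · subst hst
      exact absurd huv (lt_irrefl _)
    · have := hpnb t s hst
      rw [nb, mem_setOf_eq] at this
      push_neg at this
      by_contra hne
      have hfalse : c (p s) (p t) = false := by
        cases hcv : c (p s) (p t)
        · rfl
        · exact absurd hcv hne
      exact absurd hfalse (this.2 huv)

end BuildRed

end EM13

/-- weak Erdős–Milner: for countable nonzero `α, β` and `k > 1`,
if `ω^α → (ω^(1+β), k)²` then `ω^(α+β) → (ω^(1+β), k+1)²`. -/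
theorem stmt13 (a b : Ordinal) (ha0 : a ≠ 0) (hb0 : b ≠ 0)
    (hac : a.card ≤ Cardinal.aleph0) (hbc : b.card ≤ Cardinal.aleph0)
    (k : ℕ) (hk : 1 < k)
    (h : ToPlain2 ((ω : Ordinal) ^ a) ((ω : Ordinal) ^ (1 + b)) k) :
    ToPlain2 ((ω : Ordinal) ^ (a + b)) ((ω : Ordinal) ^ (1 + b)) (k + 1) := by
  intro c
  by_cases hcase : ∃ x, x < (ω : Ordinal) ^ (a + b) ∧
      EM13.CopyIn ((ω : Ordinal) ^ a) (EM13.nb c x ∩ Iio ((ω : Ordinal) ^ (a + b)))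
  · obtain ⟨x, hxγ, f, hf, hm⟩ := hcase
    have hY : EM13.nb c x ∩ Iio ((ω : Ordinal) ^ (a + b)) ⊆ Iio ((ω : Ordinal) ^ (a + b)) :=
      inter_subset_right
    rcases EM13.transfer c hY f hf hm k h with hred | ⟨H, hHY, hHcard, hHhom⟩
    · exact Or.inl hred
    · right
      have hxH : x ∉ H := by
        intro hxmem
        have hmem := (hHY hxmem).1
        simp only [EM13.nb, Set.mem_setOf_eq] at hmem
        rcases hmem with ⟨hlt, _⟩ | ⟨hlt, _⟩ <;> exact absurd hlt (lt_irrefl x)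
      refine ⟨insert x H, ?_, ?_, ?_⟩
      · intro y hy
        rw [Finset.coe_insert, Set.mem_insert_iff] at hy
        rcases hy with rfl | hyH
        · exact hxγ
        · exact (hHY hyH).2
      · rw [Finset.card_insert_of_notMem hxH, hHcard]
      · intro u hu v hv huv
        rw [Finset.coe_insert, Set.mem_insert_iff] at hu hv
        rcases hu with rfl | huH
        · rcases hv with rfl | hvH
          · exact absurd huv (lt_irrefl _)
          · have hmem := (hHY hvH).1
            simp only [EM13.nb, Set.mem_setOf_eq] at hmem
            rcases hmem with ⟨_, hc⟩ | ⟨hlt, _⟩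
            · exact hc
            · exact absurd (hlt.trans huv) (lt_irrefl _)
        · rcases hv with rfl | hvH
          · have hmem := (hHY huH).1
            simp only [EM13.nb, Set.mem_setOf_eq] at hmem
            rcases hmem with ⟨hlt, _⟩ | ⟨_, hc⟩
            · exact absurd (hlt.trans huv) (lt_irrefl _)
            · exact hc
          · exact hHhom u huH v hvH huv
  · left
    push_neg at hcase
    exact EM13.buildRed c ha0 hb0 hac hbc hcase

end
end

section
/- For all countable ordinals α ≥ 1 and all positive integers k, R(ω^(1+α), k+1) ≤ ω^(1+α·k): that is, ω^(1+α·k) → (ω^(1+α), k+1)². -/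
open Ordinal Set

noncomputable section

namespace Ordinal
noncomputable def nadd (a b : Ordinal.{w}) : Ordinal.{w} :=
  max (⨆ x : Iio a, Order.succ (nadd x.1 b)) (⨆ y : Iio b, Order.succ (nadd a y.1))
termination_by (a, b)
decreasing_by
  · exact Prod.Lex.left _ _ x.2
  · exact Prod.Lex.right _ y.2

infixl:65 " ♯ " => Ordinal.nadd

theorem nadd_le_iff {a b c : Ordinal.{w}} :
    a ♯ b ≤ c ↔ (∀ a' < a, a' ♯ b < c) ∧ ∀ b' < b, a ♯ b' < c := by
  rw [nadd, max_le_iff, Ordinal.iSup_le_iff, Ordinal.iSup_le_iff]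
  simp only [Order.succ_le_iff, Subtype.forall, Set.mem_Iio]

theorem nadd_lt_nadd_right {a b : Ordinal.{w}} (h : a < b) (c : Ordinal.{w}) : a ♯ c < b ♯ c :=
  (nadd_le_iff.1 le_rfl).1 a h

theorem nadd_lt_nadd_left {a b : Ordinal.{w}} (h : a < b) (c : Ordinal.{w}) : c ♯ a < c ♯ b :=
  (nadd_le_iff.1 le_rfl).2 a h

@[simp] theorem nadd_zero (a : Ordinal.{w}) : a ♯ 0 = a := by
  induction a using Ordinal.induction with
  | h a IH =>
  apply le_antisymm
  · rw [nadd_le_iff]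
    exact ⟨fun a' h => by rw [IH a' h]; exact h, fun b' h => absurd h (not_lt_zero)⟩
  · refine le_of_forall_lt fun z hz => ?_
    rw [← IH z hz]
    exact nadd_lt_nadd_right hz 0

@[simp] theorem zero_nadd (a : Ordinal.{w}) : 0 ♯ a = a := by
  induction a using Ordinal.induction with
  | h a IH =>
  apply le_antisymm
  · rw [nadd_le_iff]
    exact ⟨fun a' h => absurd h (not_lt_zero), fun b' h => by rw [IH b' h]; exact h⟩
  · refine le_of_forall_lt fun z hz => ?_
    rw [← IH z hz]
    exact nadd_lt_nadd_left hz 0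

end Ordinal

namespace EMaux
open Ordinal Set
universe u

lemma mergeAux (d : Ordinal) (Hd : ∀ u v : Ordinal, u < ω^d → v < ω^d → u ♯ v < ω^d) :
    ∀ (N p q : ℕ), p + q ≤ N → ∀ (u : Ordinal), u < ω^d → ∀ (v : Ordinal), v < ω^d →
      (ω^d*p + u) ♯ (ω^d*q + v) ≤ ω^d*((p:Ordinal)+q) + (u♯v) := by
  have hω : (ω:Ordinal)^d ≠ 0 := opow_ne_zero d omega0_ne_zero
  intro N
  induction N with
  | zero =>
      intro p q hpq u hu v hv
      obtain ⟨rfl, rfl⟩ : p = 0 ∧ q = 0 := by omega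
      simp
  | succ N ih =>
      intro p q hpq u hu v hv
      induction u using Ordinal.induction generalizing v with
      | h u ihu =>
      induction v using Ordinal.induction with
      | h v ihv =>
      rw [Ordinal.nadd_le_iff]
      constructor
      · intro x' hx'
        by_cases hc : x' < ω^d * p
        · rcases Nat.eq_zero_or_pos p with rfl | hp
          · simp at hc
          · have hp' : x' / ω^d < (p:Ordinal) := (Ordinal.div_lt hω).2 hc
            obtain ⟨n', hn'⟩ := Ordinal.lt_omega0.1 (hp'.trans (nat_lt_omega0 p))
            have hn'p : n' < p := by exact_mod_cast hn' ▸ hp'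
            have hu' : x' % ω^d < ω^d := Ordinal.mod_lt _ hω
            have hdm : ω^d * ↑n' + x' % ω^d = x' := by
              rw [← hn']; exact Ordinal.div_add_mod _ _
            calc x' ♯ (ω^d*q + v) = (ω^d*↑n' + x' % ω^d) ♯ (ω^d*q + v) := by rw [hdm]
              _ ≤ ω^d*((n':Ordinal)+q) + ((x' % ω^d) ♯ v) := ih n' q (by omega) _ hu' v hv
              _ < ω^d*((n':Ordinal)+q) + ω^d := add_lt_add_right (Hd _ _ hu' hv) _
              _ = ω^d*(((n':Ordinal)+q) + 1) := by
                  rw [mul_add ((ω:Ordinal)^d) ((n':Ordinal)+q) 1, mul_one]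
              _ ≤ ω^d*((p:Ordinal)+q) := by
                  apply mul_le_mul_right
                  have h1 : ((n'+q+1 : ℕ) : Ordinal) ≤ ((p+q : ℕ) : Ordinal) :=
                    Nat.cast_le.2 (by omega)
                  push_cast at h1
                  exact h1
              _ ≤ ω^d*((p:Ordinal)+q) + (u ♯ v) := le_self_add
        · push_neg at hc
          have hupos : u ≠ 0 := by
            rintro rfl
            rw [add_zero] at hx'
            exact (hx'.not_ge hc).elim
          have hlt : x' - ω^d*p < u :=
            Ordinal.sub_lt_of_lt_add hx' (pos_iff_ne_zero.2 hupos)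
          have hx'' : ω^d*p + (x' - ω^d*p) = x' := Ordinal.add_sub_cancel_of_le hc
          calc x' ♯ (ω^d*q + v) = (ω^d*p + (x' - ω^d*p)) ♯ (ω^d*q + v) := by rw [hx'']
            _ ≤ ω^d*((p:Ordinal)+q) + ((x' - ω^d*p) ♯ v) := ihu _ hlt (hlt.trans hu) v hv
            _ < ω^d*((p:Ordinal)+q) + (u ♯ v) :=
                add_lt_add_right (Ordinal.nadd_lt_nadd_right hlt v) _
      · intro y' hy'
        by_cases hc : y' < ω^d * q
        · rcases Nat.eq_zero_or_pos q with rfl | hq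
          · simp at hc
          · have hq' : y' / ω^d < (q:Ordinal) := (Ordinal.div_lt hω).2 hc
            obtain ⟨n', hn'⟩ := Ordinal.lt_omega0.1 (hq'.trans (nat_lt_omega0 q))
            have hn'q : n' < q := by exact_mod_cast hn' ▸ hq'
            have hv' : y' % ω^d < ω^d := Ordinal.mod_lt _ hω
            have hdm : ω^d * ↑n' + y' % ω^d = y' := by
              rw [← hn']; exact Ordinal.div_add_mod _ _
            calc (ω^d*p + u) ♯ y' = (ω^d*p + u) ♯ (ω^d*↑n' + y' % ω^d) := by rw [hdm]
              _ ≤ ω^d*((p:Ordinal)+n') + (u ♯ (y' % ω^d)) := ih p n' (by omega) u hu _ hv'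
              _ < ω^d*((p:Ordinal)+n') + ω^d := add_lt_add_right (Hd _ _ hu hv') _
              _ = ω^d*(((p:Ordinal)+n') + 1) := by
                  rw [mul_add ((ω:Ordinal)^d) ((p:Ordinal)+n') 1, mul_one]
              _ ≤ ω^d*((p:Ordinal)+q) := by
                  apply mul_le_mul_right
                  rw [add_assoc]
                  apply add_le_add_right
                  have h1 : ((n'+1 : ℕ) : Ordinal) ≤ ((q : ℕ) : Ordinal) :=
                    Nat.cast_le.2 (by omega)
                  push_cast at h1
                  exact h1
              _ ≤ ω^d*((p:Ordinal)+q) + (u ♯ v) := le_self_add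
        · push_neg at hc
          have hvpos : v ≠ 0 := by
            rintro rfl
            rw [add_zero] at hy'
            exact (hy'.not_ge hc).elim
          have hlt : y' - ω^d*q < v :=
            Ordinal.sub_lt_of_lt_add hy' (pos_iff_ne_zero.2 hvpos)
          have hy'' : ω^d*q + (y' - ω^d*q) = y' := Ordinal.add_sub_cancel_of_le hc
          calc (ω^d*p + u) ♯ y' = (ω^d*p + u) ♯ (ω^d*q + (y' - ω^d*q)) := by rw [hy'']
            _ ≤ ω^d*((p:Ordinal)+q) + (u ♯ (y' - ω^d*q)) := ihv _ hlt (hlt.trans hv)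
            _ < ω^d*((p:Ordinal)+q) + (u ♯ v) :=
                add_lt_add_right (Ordinal.nadd_lt_nadd_left hlt u) _



lemma nadd_lt_opow : ∀ (e : Ordinal) {x y : Ordinal}, x < ω^e → y < ω^e → x ♯ y < ω^e := by
  intro e
  induction e using Ordinal.induction with
  | h e IH =>
  intro x y hx hy
  rcases eq_or_ne x 0 with rfl | hx0
  · simpa using hy
  rcases eq_or_ne y 0 with rfl | hy0
  · simpa using hx
  set d := max (log ω x) (log ω y) with hd
  have hde : d < e := max_lt ((lt_opow_iff_log_lt one_lt_omega0 hx0).1 hx)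
    ((lt_opow_iff_log_lt one_lt_omega0 hy0).1 hy)
  have hω : (ω:Ordinal)^d ≠ 0 := opow_ne_zero d omega0_ne_zero
  have Hd : ∀ u v : Ordinal, u < ω^d → v < ω^d → u ♯ v < ω^d := fun u v hu hv => IH d hde hu hv
  have hxd : x < ω^(d+1) := by
    refine (lt_opow_succ_log_self one_lt_omega0 x).trans_le ?_
    rw [← Ordinal.add_one_eq_succ]
    exact opow_le_opow_right omega0_pos (add_le_add_left (le_max_left _ _) 1)
  have hyd : y < ω^(d+1) := by
    refine (lt_opow_succ_log_self one_lt_omega0 y).trans_le ?_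
    rw [← Ordinal.add_one_eq_succ]
    exact opow_le_opow_right omega0_pos (add_le_add_left (le_max_right _ _) 1)
  have hsucc : (ω:Ordinal)^(d+1) = ω^d * ω := by
    rw [opow_add, opow_one]
  have hp : x / ω^d < ω := (Ordinal.div_lt hω).2 (by rwa [← hsucc])
  have hq : y / ω^d < ω := (Ordinal.div_lt hω).2 (by rwa [← hsucc])
  obtain ⟨np, hnp⟩ := Ordinal.lt_omega0.1 hp
  obtain ⟨nq, hnq⟩ := Ordinal.lt_omega0.1 hq
  have hu : x % ω^d < ω^d := Ordinal.mod_lt _ hω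
  have hv : y % ω^d < ω^d := Ordinal.mod_lt _ hω
  have hxe : ω^d*(np:Ordinal) + x % ω^d = x := by rw [← hnp]; exact Ordinal.div_add_mod _ _
  have hye : ω^d*(nq:Ordinal) + y % ω^d = y := by rw [← hnq]; exact Ordinal.div_add_mod _ _
  have key : x ♯ y < ω^(d+1) := by
    calc x ♯ y = (ω^d*(np:Ordinal) + x % ω^d) ♯ (ω^d*(nq:Ordinal) + y % ω^d) := by
            rw [hxe, hye]
      _ ≤ ω^d*((np:Ordinal)+nq) + ((x % ω^d) ♯ (y % ω^d)) :=
            mergeAux d Hd (np+nq) np nq le_rfl _ hu _ hv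
      _ < ω^d*((np:Ordinal)+nq) + ω^d := add_lt_add_right (Hd _ _ hu hv) _
      _ = ω^d*(((np:Ordinal)+nq)+1) := by
            rw [mul_add ((ω:Ordinal)^d) ((np:Ordinal)+nq) 1, mul_one]
      _ < ω^d*ω := by
            apply mul_lt_mul_of_pos_left _ (Ordinal.opow_pos d omega0_pos)
            have : (((np+nq+1 : ℕ)) : Ordinal) < ω := nat_lt_omega0 _
            push_cast at this
            exact this
      _ = ω^(d+1) := hsucc.symm
  exact key.trans_le (opow_le_opow_right omega0_pos (by rwa [Ordinal.add_one_eq_succ, Order.succ_le_iff]))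



/-- `S` contains an increasing `τ`-sequence. -/
def HasType (S : Set Ordinal) (τ : Ordinal) : Prop :=
  ∃ f : Ordinal → Ordinal, StrictMonoOn f (Iio τ) ∧ ∀ i < τ, f i ∈ S

lemma hasType_mono {S T : Set Ordinal} {τ} (h : HasType S τ) (hST : S ⊆ T) : HasType T τ := by
  obtain ⟨f, hf, hm⟩ := h
  exact ⟨f, hf, fun i hi => hST (hm i hi)⟩

lemma hasType_Ico (l τ : Ordinal) : HasType (Ico l (l+τ)) τ := by
  refine ⟨fun i => l + i, fun i hi j hj hij => add_lt_add_right hij l, fun i hi => ?_⟩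
  exact ⟨le_self_add, add_lt_add_right hi l⟩

lemma offset_le {f : Ordinal → Ordinal} {τ l : Ordinal} (hf : StrictMonoOn f (Iio τ))
    (hl : ∀ i < τ, l ≤ f i) : ∀ i < τ, l + i ≤ f i := by
  intro i
  induction i using Ordinal.induction with
  | h i IH =>
  intro hi
  refine le_of_forall_lt fun z hz => ?_
  rcases lt_or_ge z l with h | h
  · exact h.trans_le (hl i hi)
  · have hzl : l + (z - l) = z := Ordinal.add_sub_cancel_of_le h
    have hw : z - l < i := by
      rw [← add_lt_add_iff_left l, hzl]; exact hz
    calc z = l + (z - l) := hzl.symm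
      _ ≤ f (z - l) := IH _ hw (hw.trans hi)
      _ < f i := hf (hw.trans hi) hi hw

lemma exists_gt_in_block {R : Set Ordinal} {l τ : Ordinal} (h : HasType R τ)
    (hlim : Order.IsSuccLimit τ) (hsub : R ⊆ Ico l (l+τ)) : ∀ p < l + τ, ∃ y ∈ R, p < y := by
  obtain ⟨f, hf, hm⟩ := h
  intro p hp
  by_contra hcon
  push_neg at hcon
  have h0 : f 0 ∈ R := hm 0 (by simpa using hlim.bot_lt)
  have hlp : l ≤ p := le_trans (hsub h0).1 (hcon _ h0)
  have hple : l + (p - l) = p := Ordinal.add_sub_cancel_of_le hlp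
  have hw : p - l < τ := by rw [← add_lt_add_iff_left l, hple]; exact hp
  have hw1 : p - l + 1 < τ := (Order.succ_eq_add_one (p - l)) ▸ hlim.succ_lt hw
  have := offset_le hf (fun i hi => (hsub (hm i hi)).1) _ hw1
  have hle := hcon _ (hm _ hw1)
  have : l + (p - l + 1) ≤ p := this.trans hle
  rw [← add_assoc, hple] at this
  exact (lt_irrefl p) (lt_of_lt_of_le (lt_add_one p) this)

lemma countLemma {F G : Ordinal → Ordinal} {P Q : Ordinal}
    (hF : StrictMonoOn F (Iio P)) (hG : StrictMonoOn G (Iio Q)) :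
    ∀ p ≤ P, ∀ q ≤ Q, ∀ z, (∀ w < z, (∃ j < p, F j = w) ∨ (∃ l < q, G l = w)) → z ≤ p ♯ q := by
  intro p
  induction p using Ordinal.induction with
  | h p IHp =>
  intro hp q
  induction q using Ordinal.induction with
  | h q IHq =>
  intro hq z hcov
  refine le_of_forall_lt fun w hw => ?_
  rcases hcov w hw with ⟨j, hj, rfl⟩ | ⟨l, hl, rfl⟩
  · have : F j ≤ j ♯ q := by
      apply IHp j hj (hj.le.trans hp) q hq
      intro w' hw'
      rcases hcov w' (hw'.trans hw) with ⟨j', hj', rfl⟩ | h2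
      · left
        refine ⟨j', ?_, rfl⟩
        exact (hF.lt_iff_lt (hj'.trans_le hp) (hj.trans_le hp)).1 hw'
      · exact Or.inr h2
    exact this.trans_lt (Ordinal.nadd_lt_nadd_right hj q)
  · have : G l ≤ p ♯ l := by
      apply IHq l hl (hl.le.trans hq) _
      intro w' hw'
      rcases hcov w' (hw'.trans hw) with h2 | ⟨l', hl', rfl⟩
      · exact Or.inl h2
      · right
        refine ⟨l', ?_, rfl⟩
        exact (hG.lt_iff_lt (hl'.trans_le hq) (hl.trans_le hq)).1 hw'
    exact this.trans_lt (Ordinal.nadd_lt_nadd_left hl p)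

lemma not_bddAbove_with_Ici (I : Set Ordinal) (τ : Ordinal) :
    ¬ BddAbove (I ∪ Ici τ) := by
  rintro ⟨ub, hub⟩
  have hmem : Order.succ (max τ ub) ∈ I ∪ Ici τ :=
    Or.inr (mem_Ici.2 (le_trans (le_max_left _ _) (Order.le_succ _)))
  have := hub hmem
  exact absurd ((le_max_right τ ub).trans_lt (Order.lt_succ _)) this.not_gt

lemma hasType_of_small_compl {e : Ordinal} {I : Set Ordinal} {i : Ordinal} (hi : i < ω^e)
    {b : Ordinal → Ordinal} (hb : StrictMonoOn b (Iio i))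
    (hcov : ∀ w < (ω:Ordinal)^e, w ∈ I ∨ ∃ j < i, b j = w) : HasType I (ω^e) := by
  set τ := (ω:Ordinal)^e with hτ
  set S := (I ∩ Iio τ) ∪ Ici τ with hS
  have hunb : ¬ BddAbove S := not_bddAbove_with_Ici _ _
  have hmono := Ordinal.enumOrd_strictMono hunb
  have hmain : ∀ x < τ, enumOrd S x < τ := by
    by_contra hcon
    push_neg at hcon
    obtain ⟨x₀, hx₀, hge⟩ := hcon
    set T := {x | x < τ ∧ τ ≤ enumOrd S x} with hT
    have hTne : T.Nonempty := ⟨x₀, hx₀, hge⟩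
    set x₁ := sInf T with hx₁
    have hx₁T : x₁ ∈ T := csInf_mem hTne
    have hsmall : ∀ y < x₁, enumOrd S y < τ := by
      intro y hy
      by_contra hge'
      push_neg at hge'
      exact absurd (csInf_le (OrderBot.bddBelow T) ⟨hy.trans hx₁T.1, hge'⟩) hy.not_ge
    have hcov2 : ∀ w < τ, (∃ j < x₁, enumOrd S j = w) ∨ ∃ j < i, b j = w := by
      intro w hw
      rcases hcov w hw with hwI | hb2
      · obtain ⟨y, hy⟩ := Ordinal.enumOrd_surjective hunb (Or.inl ⟨hwI, hw⟩ : w ∈ S)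
        left
        refine ⟨y, ?_, hy⟩
        by_contra hyx
        push_neg at hyx
        have : enumOrd S x₁ ≤ enumOrd S y := hmono.monotone hyx
        rw [hy] at this
        exact absurd (hx₁T.2.trans this) hw.not_ge
      · exact Or.inr hb2
    have := countLemma (hmono.strictMonoOn (Iio x₁)) hb x₁ le_rfl i le_rfl τ hcov2
    exact absurd this (nadd_lt_opow e hx₁T.1 hi).not_ge
  refine ⟨enumOrd S, hmono.strictMonoOn _, fun x hx => ?_⟩
  have hmem := Ordinal.enumOrd_mem hunb x
  rcases hmem with ⟨hI, _⟩ | hIci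
  · exact hI
  · exact absurd (hIci.trans_lt (hmain x hx)) (lt_irrefl τ)

lemma exists_param_of_not_hasType {e : Ordinal} {Aset : Set Ordinal}
    (h : ¬ HasType Aset (ω^e)) :
    ∃ i < (ω:Ordinal)^e, ∃ b : Ordinal → Ordinal, StrictMonoOn b (Iio i) ∧
      ∀ w < (ω:Ordinal)^e, w ∈ Aset → ∃ j < i, b j = w := by
  set τ := (ω:Ordinal)^e with hτ
  set S := (Aset ∩ Iio τ) ∪ Ici τ with hS
  have hunb : ¬ BddAbove S := not_bddAbove_with_Ici _ _
  have hmono := Ordinal.enumOrd_strictMono hunb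
  have hex : ∃ x < τ, τ ≤ enumOrd S x := by
    by_contra hcon
    push_neg at hcon
    refine absurd ⟨enumOrd S, hmono.strictMonoOn _, fun x hx => ?_⟩ h
    rcases Ordinal.enumOrd_mem hunb x with ⟨hI, _⟩ | hIci
    · exact hI
    · exact absurd (hIci.trans_lt (hcon x hx)) (lt_irrefl τ)
  obtain ⟨x₀, hx₀, hge⟩ := hex
  set T := {x | x < τ ∧ τ ≤ enumOrd S x} with hT
  have hTne : T.Nonempty := ⟨x₀, hx₀, hge⟩
  set x₁ := sInf T with hx₁
  have hx₁T : x₁ ∈ T := csInf_mem hTne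
  refine ⟨x₁, hx₁T.1, enumOrd S, hmono.strictMonoOn _, fun w hw hwA => ?_⟩
  obtain ⟨y, hy⟩ := Ordinal.enumOrd_surjective hunb (Or.inl ⟨hwA, hw⟩ : w ∈ S)
  refine ⟨y, ?_, hy⟩
  by_contra hyx
  push_neg at hyx
  have : enumOrd S x₁ ≤ enumOrd S y := hmono.monotone hyx
  rw [hy] at this
  exact absurd (hx₁T.2.trans this) hw.not_ge

lemma hasType_split {e : Ordinal} {S A B : Set Ordinal} (hS : HasType S (ω^e))
    (hcov : S ⊆ A ∪ B) : HasType (S∩A) (ω^e) ∨ HasType (S∩B) (ω^e) := by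
  obtain ⟨f, hf, hm⟩ := hS
  set τ := (ω:Ordinal)^e with hτ
  set IA : Set Ordinal := {i | i < τ ∧ f i ∈ A} with hIA
  set IB : Set Ordinal := {i | i < τ ∧ f i ∈ B} with hIB
  by_cases hA : HasType IA (ω^e)
  · left
    obtain ⟨g, hg, hgm⟩ := hA
    refine ⟨f ∘ g, fun i hi j hj hij => ?_, fun i hi => ?_⟩
    · exact hf (hgm i hi).1 (hgm j hj).1 (hg hi hj hij)
    · exact ⟨hm _ (hgm i hi).1, (hgm i hi).2⟩
  · obtain ⟨i, hi, b, hb, hbc⟩ := exists_param_of_not_hasType hA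
    right
    have hcov2 : ∀ w < (ω:Ordinal)^e, w ∈ IB ∨ ∃ j < i, b j = w := by
      intro w hw
      rcases hcov (hm w hw) with hA' | hB'
      · exact Or.inr (hbc w hw ⟨hw, hA'⟩)
      · exact Or.inl ⟨hw, hB'⟩
    obtain ⟨g, hg, hgm⟩ := hasType_of_small_compl hi hb hcov2
    refine ⟨f ∘ g, fun i' hi' j hj hij => ?_, fun i' hi' => ?_⟩
    · exact hf (hgm i' hi').1 (hgm j hj).1 (hg hi' hj hij)
    · exact ⟨hm _ (hgm i' hi').1, (hgm i' hi').2⟩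

lemma not_hasType_singleton {x τ : Ordinal} (h1 : 1 < τ) : ¬ HasType {x} τ := by
  rintro ⟨f, hf, hm⟩
  have h0 : f 0 ∈ ({x} : Set Ordinal) := hm 0 (lt_trans zero_lt_one h1)
  have h1' : f 1 ∈ ({x} : Set Ordinal) := hm 1 h1
  have := hf (lt_trans zero_lt_one h1) h1 zero_lt_one
  rw [mem_singleton_iff.1 h0, mem_singleton_iff.1 h1'] at this
  exact lt_irrefl x this


lemma card_opow_omega0_le {x : Ordinal.{u}} (hx : x.card ≤ Cardinal.aleph0) :
    ((ω:Ordinal)^x).card ≤ Cardinal.aleph0 := by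
  have key : ∀ y : Ordinal.{u}, y.card ≤ Cardinal.aleph0 → ((ω:Ordinal)^y).card ≤ Cardinal.aleph0 := by
    intro y
    induction y using Ordinal.limitRecOn with
    | zero => intro _; simp
    | add_one y IH =>
        intro hy
        rw [opow_add_one, Ordinal.card_mul]
        have h1 : y.card ≤ Cardinal.aleph0 :=
          le_trans (Ordinal.card_le_card ((Order.le_succ y).trans_eq (Order.succ_eq_add_one y))) hy
        calc ((ω:Ordinal.{u})^y).card * (Ordinal.card.{u} ω) ≤ Cardinal.aleph0 * Cardinal.aleph0 := by
              rw [Ordinal.card_omega0]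
              exact mul_le_mul' (IH h1) le_rfl
          _ = Cardinal.aleph0 := Cardinal.aleph0_mul_aleph0
    | limit y hy IH =>
        intro hcard
        have hlt1 : ∀ z < y, ((ω:Ordinal)^z) < (Cardinal.aleph 1).ord := by
          intro z hz
          rw [Cardinal.lt_ord]
          have : z.card ≤ Cardinal.aleph0 :=
            le_trans (Ordinal.card_le_card hz.le) hcard
          exact lt_of_le_of_lt (IH z hz this) Cardinal.aleph0_lt_aleph_one
        have hbsup : Ordinal.bsup.{u,u} y (fun z _ => (ω:Ordinal)^z) < (Cardinal.aleph 1).ord := by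
          apply Ordinal.bsup_lt_ord
          · rw [Cardinal.isRegular_aleph_one.cof_eq]
            exact lt_of_le_of_lt hcard Cardinal.aleph0_lt_aleph_one
          · exact fun i hi => hlt1 i hi
        have hle : (ω:Ordinal)^y ≤ Ordinal.bsup.{u,u} y (fun z _ => (ω:Ordinal)^z) := by
          rw [Ordinal.opow_le_of_isSuccLimit omega0_ne_zero hy]
          exact fun z hz => Ordinal.le_bsup _ z hz
        have : (ω:Ordinal)^y < (Cardinal.aleph 1).ord := lt_of_le_of_lt hle hbsup
        rw [Cardinal.lt_ord] at this
        have h1 : (1 : Ordinal) = Order.succ 0 := by simp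
        rw [h1, Cardinal.aleph_succ, Cardinal.aleph_zero] at this
        exact Order.lt_succ_iff.1 this
  exact key x hx

lemma omega0_le_opow {A : Ordinal.{u}} (hA : A ≠ 0) : (ω:Ordinal) ≤ ω^A := by
  calc (ω:Ordinal) = ω^(1:Ordinal) := (opow_one ω).symm
    _ ≤ ω^A := opow_le_opow_right omega0_pos (Ordinal.one_le_iff_ne_zero.2 hA)

lemma one_lt_omega0_opow {A : Ordinal.{u}} (hA : A ≠ 0) : (1:Ordinal) < ω^A :=
  lt_of_lt_of_le one_lt_omega0 (omega0_le_opow hA)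

lemma isLimit_omega0_opow {A : Ordinal.{u}} (hA : A ≠ 0) : Order.IsSuccLimit ((ω:Ordinal)^A) :=
  isSuccLimit_opow_left isSuccLimit_omega0 hA



section Machine
variable (c : Ordinal.{u} → Ordinal.{u} → Bool) (A : Ordinal.{u}) (E : ℕ → Ordinal.{u})

def Shr (x : Ordinal.{u}) (S : Set Ordinal.{u}) : Set Ordinal.{u} :=
  {y | y ∈ S ∧ y ≠ x ∧ (y < x → c y x = true) ∧ (x < y → c x y = true)}

noncomputable def pick (S : Set Ordinal.{u}) (b : Ordinal.{u}) : Ordinal.{u} :=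
  letI := Classical.dec (∃ y ∈ S, b < y)
  if h : ∃ y ∈ S, b < y then h.choose else 0

lemma pick_spec {S : Set Ordinal.{u}} {b : Ordinal.{u}} (h : ∃ y ∈ S, b < y) :
    pick S b ∈ S ∧ b < pick S b := by
  rw [pick]
  letI := Classical.dec (∃ y ∈ S, b < y)
  rw [dif_pos h]
  exact ⟨h.choose_spec.1, h.choose_spec.2⟩

noncomputable def mach : ℕ → (ℕ → Set Ordinal.{u}) × (ℕ → Ordinal.{u})
  | 0 => (fun s => Ico (ω^A * E s) (ω^A * E s + ω^A), fun s => ω^A * E s)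
  | (t+1) =>
      let st := mach t
      let x := pick (st.1 (Nat.unpair t).1) (st.2 (Nat.unpair t).1)
      (fun s' => Shr c x (st.1 s'), Function.update st.2 (Nat.unpair t).1 x)

noncomputable def xpt (t : ℕ) : Ordinal.{u} :=
  pick ((mach c A E t).1 (Nat.unpair t).1) ((mach c A E t).2 (Nat.unpair t).1)

lemma mach_succ_fst (t : ℕ) (s : ℕ) :
    (mach c A E (t+1)).1 s = Shr c (xpt c A E t) ((mach c A E t).1 s) := rfl

lemma mach_succ_snd (t : ℕ) :
    (mach c A E (t+1)).2 = Function.update (mach c A E t).2 (Nat.unpair t).1 (xpt c A E t) := rfl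

variable {γ : Ordinal.{u}}
variable (hA0 : A ≠ 0) (hblock : ∀ s, ω^A * E s + ω^A ≤ γ)
  (hGS : ∀ x, x < γ → ∀ S, S ⊆ Iio γ → HasType S (ω^A) → HasType (Shr c x S) (ω^A))

include hblock in
lemma block_sub_Iio (s : ℕ) : Ico (ω^A * E s) (ω^A * E s + ω^A) ⊆ Iio γ :=
  fun y hy => lt_of_lt_of_le hy.2 (hblock s)

include hA0 hblock hGS in
lemma mach_inv : ∀ t : ℕ, (∀ s, (mach c A E t).1 s ⊆ Ico (ω^A * E s) (ω^A * E s + ω^A)) ∧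
    (∀ s, HasType ((mach c A E t).1 s) (ω^A)) ∧
    (∀ s, (mach c A E t).2 s ∈ Ico (ω^A * E s) (ω^A * E s + ω^A)) := by
  intro t
  induction t with
  | zero =>
      refine ⟨fun s => subset_rfl, fun s => hasType_Ico _ _, fun s => ?_⟩
      exact ⟨le_rfl, lt_add_of_pos_right _ (opow_pos A omega0_pos)⟩
  | succ t IHt =>
      obtain ⟨hsub, hty, hm⟩ := IHt
      set s₀ := (Nat.unpair t).1 with hs₀
      have hex : ∃ y ∈ (mach c A E t).1 s₀, (mach c A E t).2 s₀ < y :=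
        exists_gt_in_block (hty s₀) (isLimit_omega0_opow hA0) (hsub s₀) _ (hm s₀).2
      have hx := pick_spec hex
      have hxblock := hsub s₀ hx.1
      have hxγ : pick ((mach c A E t).1 s₀) ((mach c A E t).2 s₀) < γ :=
        block_sub_Iio A E hblock s₀ hxblock
      refine ⟨fun s => ?_, fun s => ?_, fun s => ?_⟩
      · rw [mach_succ_fst]
        refine subset_trans ?_ (hsub s)
        exact fun y hy => hy.1
      · rw [mach_succ_fst]
        exact hGS _ hxγ _ (subset_trans (hsub s) (block_sub_Iio A E hblock s)) (hty s)
      · rw [mach_succ_snd]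
        rcases eq_or_ne s₀ s with rfl | hne
        · rw [Function.update_self]
          exact hxblock
        · rw [Function.update_of_ne (Ne.symm hne)]
          exact hm s

include hA0 hblock hGS in
lemma xpt_spec (t : ℕ) : xpt c A E t ∈ (mach c A E t).1 (Nat.unpair t).1 ∧
    (mach c A E t).2 (Nat.unpair t).1 < xpt c A E t := by
  obtain ⟨hsub, hty, hm⟩ := mach_inv c A E hA0 hblock hGS t
  exact pick_spec (exists_gt_in_block (hty _) (isLimit_omega0_opow hA0) (hsub _) _ (hm _).2)

lemma mach_fst_antitone : ∀ t₁ t₂ : ℕ, t₁ ≤ t₂ → ∀ s,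
    (mach c A E t₂).1 s ⊆ (mach c A E t₁).1 s := by
  intro t₁ t₂ h
  induction t₂, h using Nat.le_induction with
  | base => exact fun s => subset_rfl
  | succ t₂ h IH =>
      intro s
      rw [mach_succ_fst]
      exact subset_trans (fun y hy => hy.1) (IH s)

include hA0 hblock hGS in
lemma xpt_red {t t' : ℕ} (h : t < t') :
    xpt c A E t' ≠ xpt c A E t ∧
    (xpt c A E t' < xpt c A E t → c (xpt c A E t') (xpt c A E t) = true) ∧
    (xpt c A E t < xpt c A E t' → c (xpt c A E t) (xpt c A E t') = true) := by
  have h1 := (xpt_spec c A E hA0 hblock hGS t').1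
  have h2 := mach_fst_antitone c A E (t+1) t' h _ h1
  rw [mach_succ_fst] at h2
  exact ⟨h2.2.1, h2.2.2.1, h2.2.2.2⟩

lemma m_const {s : ℕ} : ∀ {t u : ℕ}, t < u →
    (∀ v, t < v → v < u → (Nat.unpair v).1 ≠ s) →
    (mach c A E u).2 s = (mach c A E (t+1)).2 s := by
  intro t u h
  induction u, h using Nat.le_induction with
  | base => intro _; rfl
  | succ u h IH =>
      intro hno
      rw [mach_succ_snd]
      rcases eq_or_ne (Nat.unpair u).1 s with heq | hne
      · exact absurd heq (hno u h (Nat.lt_succ_self u))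
      · rw [Function.update_of_ne (Ne.symm hne)]
        exact IH (fun v hv1 hv2 => hno v hv1 (hv2.trans (Nat.lt_succ_self u)))

include hA0 hblock hGS in
lemma xpt_mono_succ (s n : ℕ) :
    xpt c A E (Nat.pair s n) < xpt c A E (Nat.pair s (n+1)) := by
  have hsm : StrictMono (Nat.pair s) := fun _ _ h => Nat.pair_lt_pair_right s h
  set t₁ := Nat.pair s n with ht₁
  set t₂ := Nat.pair s (n+1) with ht₂
  have hlt : t₁ < t₂ := hsm (Nat.lt_succ_self n)
  have hmach : (mach c A E t₂).2 s = (mach c A E (t₁+1)).2 s := by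
    apply m_const c A E hlt
    intro v hv1 hv2 heq
    have hv : v = Nat.pair s (Nat.unpair v).2 := by
      conv_lhs => rw [← Nat.pair_unpair v]
      rw [heq]
    rw [hv] at hv1 hv2
    have hj1 : n < (Nat.unpair v).2 := hsm.lt_iff_lt.1 hv1
    have hj2 : (Nat.unpair v).2 < n + 1 := hsm.lt_iff_lt.1 hv2
    omega
  have hm1 : (mach c A E (t₁+1)).2 s = xpt c A E t₁ := by
    rw [mach_succ_snd]
    have : (Nat.unpair t₁).1 = s := by rw [ht₁, Nat.unpair_pair]
    rw [← this, Function.update_self]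
  have hfin := (xpt_spec c A E hA0 hblock hGS t₂).2
  have hs2 : (Nat.unpair t₂).1 = s := by rw [ht₂, Nat.unpair_pair]
  rw [hs2, hmach, hm1] at hfin
  exact hfin

include hA0 hblock hGS in
lemma xpt_mono (s : ℕ) {n n' : ℕ} (h : n < n') :
    xpt c A E (Nat.pair s n) < xpt c A E (Nat.pair s n') := by
  induction n', h using Nat.le_induction with
  | base => exact xpt_mono_succ c A E hA0 hblock hGS s n
  | succ n' h IH => exact IH.trans (xpt_mono_succ c A E hA0 hblock hGS s n')

include hA0 hblock hGS in
lemma xpt_block (s n : ℕ) :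
    xpt c A E (Nat.pair s n) ∈ Ico (ω^A * E s) (ω^A * E s + ω^A) := by
  obtain ⟨hsub, _, _⟩ := mach_inv c A E hA0 hblock hGS (Nat.pair s n)
  have h := (xpt_spec c A E hA0 hblock hGS (Nat.pair s n)).1
  have hs : (Nat.unpair (Nat.pair s n)).1 = s := by rw [Nat.unpair_pair]
  rw [hs] at h
  exact hsub s h

end Machine


lemma shr_def (c : Ordinal.{u} → Ordinal.{u} → Bool) (x : Ordinal.{u}) (S : Set Ordinal.{u}) :
    Shr c x S = {y | y ∈ S ∧ y ≠ x ∧ (y < x → c y x = true) ∧ (x < y → c x y = true)} := rfl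

theorem stepEM (a A : Ordinal.{u}) (ha : 1 ≤ a) (hA : 1 ≤ A)
    (hcnt : ((ω:Ordinal.{u})^a).card ≤ Cardinal.aleph0) (k : ℕ)
    (IH : ToPlain2 ((ω:Ordinal)^A) ((ω:Ordinal)^(1+a)) (k+1)) :
    ToPlain2 ((ω:Ordinal)^(A+a)) ((ω:Ordinal)^(1+a)) (k+2) := by
  intro c
  set γ := (ω:Ordinal)^(A+a) with hγdef
  have hγ : γ = ω^A * ω^a := opow_add ω A a
  have hA0 : A ≠ 0 := fun h => by rw [h] at hA; exact absurd hA (by simp)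
  have ha0 : a ≠ 0 := fun h => by rw [h] at ha; exact absurd ha (by simp)
  rcases em (BlueSet c γ (k+2)) with hblue | hnoblue
  · exact Or.inr hblue
  left
  by_contra hnored
  -- F1 : every ω^A-sized subset has a blue (k+1)-set
  have F1 : ∀ S : Set Ordinal, S ⊆ Iio γ → HasType S (ω^A) →
      ∃ H : Finset Ordinal, ↑H ⊆ S ∧ H.card = k+1 ∧ Homog c false ↑H := by
    intro S hSsub hSty
    obtain ⟨f, hf, hm⟩ := hSty
    rcases IH (fun i j => c (f i) (f j)) with ⟨X', hX'sub, ⟨e1⟩, hX'h⟩ |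
      ⟨H', hHsub, hHcard, hHhom⟩
    · exfalso
      apply hnored
      refine ⟨f '' X', ?_, ⟨(StrictMonoOn.orderIso f X' (hf.mono hX'sub)).symm.trans e1⟩, ?_⟩
      · rintro y ⟨i, hiX, rfl⟩
        exact hSsub (hm i (hX'sub hiX))
      · rintro x ⟨i, hiX, rfl⟩ y ⟨j, hjX, rfl⟩ hxy
        have hij : i < j := by
          rcases lt_trichotomy i j with h | h | h
          · exact h
          · rw [h] at hxy; exact absurd hxy (lt_irrefl _)
          · exact absurd (hf (hX'sub hjX) (hX'sub hiX) h) (asymm hxy)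
        exact hX'h i hiX j hjX hij
    · classical
      refine ⟨H'.image f, ?_, ?_, ?_⟩
      · intro y hy
        rw [Finset.coe_image] at hy
        obtain ⟨i, hiH, rfl⟩ := hy
        exact hm i (hHsub hiH)
      · rw [Finset.card_image_of_injOn (hf.injOn.mono hHsub), hHcard]
      · intro x hx y hy hxy
        rw [Finset.coe_image] at hx hy
        obtain ⟨i, hiH, rfl⟩ := hx
        obtain ⟨j, hjH, rfl⟩ := hy
        have hij : i < j := by
          rcases lt_trichotomy i j with h | h | h
          · exact h
          · rw [h] at hxy; exact absurd hxy (lt_irrefl _)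
          · exact absurd (hf (hHsub hjH) (hHsub hiH) h) (asymm hxy)
        exact hHhom i hiH j hjH hij
  -- shrink preserves type
  have hGS : ∀ x, x < γ → ∀ S, S ⊆ Iio γ → HasType S (ω^A) → HasType (Shr c x S) (ω^A) := by
    intro x hxγ S hsub hty
    set BadL : Set Ordinal := {y | y < x ∧ c y x = false} with hBadL
    set BadU : Set Ordinal := {y | x < y ∧ c x y = false} with hBadU
    set GoodP : Set Ordinal :=
      {y | y ≠ x ∧ (y < x → c y x = true) ∧ (x < y → c x y = true)} with hGoodP
    have hcov : S ⊆ GoodP ∪ (BadL ∪ (BadU ∪ {x})) := by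
      intro y hy
      rcases lt_trichotomy y x with h | h | h
      · cases hcyx : c y x
        · exact Or.inr (Or.inl ⟨h, hcyx⟩)
        · exact Or.inl ⟨ne_of_lt h, fun _ => hcyx, fun h' => absurd h' (asymm h)⟩
      · exact Or.inr (Or.inr (Or.inr h))
      · cases hcxy : c x y
        · exact Or.inr (Or.inr (Or.inl ⟨h, hcxy⟩))
        · exact Or.inl ⟨ne_of_gt h, fun h' => absurd h' (asymm h), fun _ => hcxy⟩
    rcases hasType_split hty hcov with h1 | h2
    · have heq : S ∩ GoodP = Shr c x S := by
        rw [shr_def]; rfl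
      rwa [heq] at h1
    exfalso
    rcases hasType_split h2 (fun y hy => hy.2) with h3 | h4
    · obtain ⟨H, hHsub, hHcard, hHhom⟩ := F1 _ (fun y hy => hsub hy.1.1) h3
      apply hnoblue
      have hxH : x ∉ H := fun hmem => absurd (hHsub hmem).2.1 (lt_irrefl x)
      refine ⟨insert x H, ?_, ?_, ?_⟩
      · rw [Finset.coe_insert]
        exact Set.insert_subset hxγ (fun y hy => hsub (hHsub hy).1.1)
      · rw [Finset.card_insert_of_notMem hxH, hHcard]
      · intro u hu v hv huv
        simp only [Finset.coe_insert, Set.mem_insert_iff, Finset.mem_coe] at hu hv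
        rcases hu with rfl | hu
        · rcases hv with rfl | hv
          · exact absurd huv (lt_irrefl _)
          · exact absurd (hHsub hv).2.1 (asymm huv)
        · rcases hv with rfl | hv
          · exact (hHsub hu).2.2
          · exact hHhom u hu v hv huv
    rcases hasType_split h4 (fun y hy => hy.2) with h5 | h6
    · obtain ⟨H, hHsub, hHcard, hHhom⟩ := F1 _ (fun y hy => hsub hy.1.1.1) h5
      apply hnoblue
      have hxH : x ∉ H := fun hmem => absurd (hHsub hmem).2.1 (lt_irrefl x)
      refine ⟨insert x H, ?_, ?_, ?_⟩
      · rw [Finset.coe_insert]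
        exact Set.insert_subset hxγ (fun y hy => hsub (hHsub hy).1.1.1)
      · rw [Finset.card_insert_of_notMem hxH, hHcard]
      · intro u hu v hv huv
        simp only [Finset.coe_insert, Set.mem_insert_iff, Finset.mem_coe] at hu hv
        rcases hu with rfl | hu
        · rcases hv with rfl | hv
          · exact absurd huv (lt_irrefl _)
          · exact (hHsub hv).2.2
        · rcases hv with rfl | hv
          · exact absurd (huv.trans (hHsub hu).2.1) (lt_irrefl _)
          · exact hHhom u hu v hv huv
    · exact not_hasType_singleton (one_lt_omega0_opow hA0)
        (hasType_mono h6 (fun y hy => hy.2))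
  -- enumeration of Iio (ω^a)
  have hcnt2 : Countable ↥(Iio ((ω:Ordinal)^a)) := by
    rw [← Cardinal.mk_le_aleph0_iff, Ordinal.mk_Iio_ordinal]
    calc Cardinal.lift.{u+1,u} ((ω:Ordinal)^a).card
        ≤ Cardinal.lift.{u+1,u} Cardinal.aleph0 := Cardinal.lift_le.2 hcnt
      _ = Cardinal.aleph0 := Cardinal.lift_aleph0
  have hinf : Infinite ↥(Iio ((ω:Ordinal)^a)) := by
    rw [← Cardinal.aleph0_le_mk_iff, Ordinal.mk_Iio_ordinal]
    have h1 : Cardinal.aleph0 ≤ ((ω:Ordinal)^a).card := by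
      rw [← Ordinal.card_omega0]
      exact Ordinal.card_le_card (omega0_le_opow ha0)
    calc Cardinal.aleph0 = Cardinal.lift.{u+1,u} Cardinal.aleph0 := Cardinal.lift_aleph0.symm
      _ ≤ _ := Cardinal.lift_le.2 h1
  obtain ⟨D⟩ := nonempty_denumerable ↥(Iio ((ω:Ordinal)^a))
  set e : ↥(Iio ((ω:Ordinal)^a)) ≃ ℕ := @Denumerable.eqv _ D with he
  set E : ℕ → Ordinal := fun s => ((e.symm s : ↥(Iio ((ω:Ordinal)^a))) : Ordinal) with hE
  have hElt : ∀ s, E s < (ω:Ordinal)^a := fun s => (e.symm s).2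
  have hEinv : ∀ ν (hν : ν < (ω:Ordinal)^a), E (e ⟨ν, hν⟩) = ν := by
    intro ν hν
    rw [hE]
    simp
  have hblockle : ∀ s, ω^A * E s + ω^A ≤ γ := by
    intro s
    rw [hγ, ← Ordinal.mul_succ]
    exact mul_le_mul_right (((isLimit_omega0_opow ha0).succ_lt (hElt s))).le _
  classical
  -- the final embedding
  have hτ : (ω:Ordinal)^((1:Ordinal)+a) = ω * ω^a := by rw [opow_add, opow_one]
  set g : Ordinal → Ordinal := fun ι =>
    if h : ι / ω < (ω:Ordinal)^a ∧ ∃ n : ℕ, (n:Ordinal) = ι % ω then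
      xpt c A E (Nat.pair (e ⟨ι / ω, h.1⟩) h.2.choose)
    else 0 with hg
  have key : ∀ ι < (ω:Ordinal)^((1:Ordinal)+a), ∃ (hν : ι/ω < (ω:Ordinal)^a) (n : ℕ),
      ((n:Ordinal) = ι % ω) ∧ g ι = xpt c A E (Nat.pair (e ⟨ι/ω, hν⟩) n) := by
    intro ι hι
    rw [hτ] at hι
    have hν : ι/ω < (ω:Ordinal)^a := (Ordinal.div_lt omega0_ne_zero).2 hι
    have hmod : ι % ω < ω := Ordinal.mod_lt ι omega0_ne_zero
    obtain ⟨n, hn⟩ := Ordinal.lt_omega0.1 hmod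
    have hex : ∃ n:ℕ, (n:Ordinal) = ι % ω := ⟨n, hn.symm⟩
    refine ⟨hν, hex.choose, hex.choose_spec, ?_⟩
    rw [hg]
    simp only []
    rw [dif_pos ⟨hν, hex⟩]
  have hgγ : ∀ ι < (ω:Ordinal)^((1:Ordinal)+a), g ι < γ := by
    intro ι hι
    obtain ⟨hν, n, hn, hgv⟩ := key ι hι
    rw [hgv]
    have hb := xpt_block c A E hA0 hblockle hGS (e ⟨ι/ω, hν⟩) n
    exact lt_of_lt_of_le hb.2 (hblockle _)
  have hgmono : StrictMonoOn g (Iio ((ω:Ordinal)^((1:Ordinal)+a))) := by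
    intro ι hι κ hκ hικ
    obtain ⟨hν1, n1, hn1, hg1⟩ := key ι hι
    obtain ⟨hν2, n2, hn2, hg2⟩ := key κ hκ
    rw [hg1, hg2]
    have hdiv_le : ι / ω ≤ κ / ω := Ordinal.div_le_left hικ.le ω
    rcases eq_or_lt_of_le hdiv_le with heq | hlt
    · have hsame : e ⟨ι/ω, hν1⟩ = e ⟨κ/ω, hν2⟩ := by
        congr 1
        exact Subtype.ext heq
      have hn12 : n1 < n2 := by
        have h1 := Ordinal.div_add_mod ι ω
        have h2 := Ordinal.div_add_mod κ ω
        rw [← h1, ← h2, heq] at hικ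
        have h3 := lt_of_add_lt_add_left hικ
        rw [← hn1, ← hn2] at h3
        exact_mod_cast h3
      rw [hsame]
      exact xpt_mono c A E hA0 hblockle hGS _ hn12
    · have hb1 := xpt_block c A E hA0 hblockle hGS (e ⟨ι/ω, hν1⟩) n1
      have hb2 := xpt_block c A E hA0 hblockle hGS (e ⟨κ/ω, hν2⟩) n2
      rw [hEinv _ hν1] at hb1
      rw [hEinv _ hν2] at hb2
      calc xpt c A E (Nat.pair (e ⟨ι/ω, hν1⟩) n1) < ω^A * (ι/ω) + ω^A := hb1.2
        _ = ω^A * (ι/ω + 1) := by rw [mul_add, mul_one]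
        _ ≤ ω^A * (κ/ω) := by
            apply mul_le_mul_right
            rw [Ordinal.add_one_eq_succ, Order.succ_le_iff]
            exact hlt
        _ ≤ xpt c A E (Nat.pair (e ⟨κ/ω, hν2⟩) n2) := hb2.1
  have hghom : Homog c true (g '' (Iio ((ω:Ordinal)^((1:Ordinal)+a)))) := by
    rintro x ⟨ι, hι, rfl⟩ y ⟨κ, hκ, rfl⟩ hxy
    obtain ⟨hν1, n1, hn1, hg1⟩ := key ι hι
    obtain ⟨hν2, n2, hn2, hg2⟩ := key κ hκ
    rw [hg1] at hxy ⊢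
    rw [hg2] at hxy ⊢
    set t1 := Nat.pair (e ⟨ι/ω, hν1⟩) n1 with ht1
    set t2 := Nat.pair (e ⟨κ/ω, hν2⟩) n2 with ht2
    have hne : t1 ≠ t2 := by
      intro h
      rw [h] at hxy
      exact absurd hxy (lt_irrefl _)
    rcases lt_or_gt_of_ne hne with h | h
    · exact (xpt_red c A E hA0 hblockle hGS h).2.2 hxy
    · exact (xpt_red c A E hA0 hblockle hGS h).2.1 hxy
  apply hnored
  exact ⟨g '' (Iio ((ω:Ordinal)^((1:Ordinal)+a))),
    fun y ⟨ι, hι, hgι⟩ => hgι ▸ hgγ ι hι,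
    ⟨(StrictMonoOn.orderIso g _ hgmono).symm⟩, hghom⟩

theorem baseEM (τ : Ordinal.{u}) : ToPlain2 τ τ 2 := by
  classical
  intro c
  rcases em (BlueSet c τ 2) with hb | hb
  · exact Or.inr hb
  left
  refine ⟨Iio τ, subset_rfl, ⟨OrderIso.refl _⟩, ?_⟩
  intro x hx y hy hxy
  by_contra hc
  apply hb
  have hxy' : x ≠ y := ne_of_lt hxy
  refine ⟨{x, y}, ?_, ?_, ?_⟩
  · intro z hz
    simp only [Finset.coe_insert, Finset.coe_singleton, Set.mem_insert_iff,
      Set.mem_singleton_iff] at hz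
    rcases hz with rfl | rfl
    · exact hx
    · exact hy
  · rw [Finset.card_insert_of_notMem (by simp [hxy']), Finset.card_singleton]
  · intro u hu v hv huv
    simp only [Finset.coe_insert, Finset.coe_singleton, Set.mem_insert_iff,
      Set.mem_singleton_iff] at hu hv
    rcases hu with rfl | rfl <;> rcases hv with rfl | rfl
    · exact absurd huv (lt_irrefl _)
    · exact Bool.eq_false_iff.2 hc
    · exact absurd (huv.trans hxy) (lt_irrefl _)
    · exact absurd huv (lt_irrefl _)


theorem main (a : Ordinal.{u}) (ha1 : 1 ≤ a) (hac : a.card ≤ Cardinal.aleph0)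
    (k : ℕ) (hk : 0 < k) :
    ToPlain2 ((ω : Ordinal) ^ (1 + a * k)) ((ω : Ordinal) ^ (1 + a)) (k + 1) := by
  have hcnt : ((ω:Ordinal)^a).card ≤ Cardinal.aleph0 := card_opow_omega0_le hac
  have aux : ∀ j : ℕ, ToPlain2 ((ω:Ordinal)^((1:Ordinal) + a * (j+1 : ℕ))) ((ω:Ordinal)^((1:Ordinal)+a)) (j+2) := by
    intro j
    induction j with
    | zero =>
        have h1 : (1:Ordinal) + a * ((0+1 : ℕ) : Ordinal) = 1 + a := by
          norm_num
        rw [show (((0:ℕ)+1 : ℕ) : Ordinal) = ((0+1 : ℕ) : Ordinal) from rfl, h1]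
        exact baseEM _
    | succ j IHj =>
        have h2 := stepEM a ((1:Ordinal) + a * (j+1 : ℕ)) ha1
          le_self_add hcnt (j+1) IHj
        have h3 : ((1:Ordinal) + a * (j+1 : ℕ)) + a = (1:Ordinal) + a * (j+1+1 : ℕ) := by
          rw [add_assoc]
          congr 1
          have hcast : ((j+1+1 : ℕ) : Ordinal) = ((j+1 : ℕ) : Ordinal) + 1 := by
            push_cast
            rfl
          rw [hcast, mul_add, mul_one]
        rw [h3] at h2
        exact h2
  obtain ⟨j, rfl⟩ : ∃ j, k = j + 1 := ⟨k - 1, (Nat.succ_pred_eq_of_pos hk).symm⟩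
  exact aux j

end EMaux

/-- for countable `α ≥ 1` and finite `k ≥ 1`,
`ω^(1+α·k) → (ω^(1+α), k+1)²`, i.e. `R(ω^(1+α), k+1) ≤ ω^(1+α·k)`. -/
theorem stmt14 (a : Ordinal) (ha1 : 1 ≤ a) (hac : a.card ≤ Cardinal.aleph0)
    (k : ℕ) (hk : 0 < k) :
    ToPlain2 ((ω : Ordinal) ^ (1 + a * k)) ((ω : Ordinal) ^ (1 + a)) (k + 1) :=
  EMaux.main a ha1 hac k hk

end
end
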